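/- arXiv:1509.05502 — 11 statements merged into one kernel-verified Lean document; each statement's English description precedes it below -/
import Mathlib

section
/- Let d be the 0–1 distance on 𝒳 (d(x,x̂) = 0 if x = x̂ and d(x,x̂) = 1 otherwise). Define α*(y,z,w) = 1/|𝒴| for all (y,z,w) ∈ 𝒴 × 𝒳 × 𝒲, let x̂* ∈ 𝒳 be a maximizer of the marginal x ↦ ∑_{z,w} p(x,z,w), and define β*(x̂,y) = 1 if x̂ = x̂* and β*(x̂,y) = 0 otherwise. Then α* ∈ A, β* ∈ B, and (α*,β*) is a Nash equilibrium (a babbling equilibrium). -/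
open Finset

noncomputable section

variable {X W Y : Type*} [Fintype X] [Fintype W] [Fintype Y]

/-- The set `A` of sender policies: conditional distributions of `Y` given `(Z, W)`. -/
def senderSet (X W Y : Type*) [Fintype X] [Fintype W] [Fintype Y] :
    Set (Y × X × W → ℝ) :=
  {α | (∀ t, 0 ≤ α t ∧ α t ≤ 1) ∧ ∀ z w, ∑ y, α (y, z, w) = 1}

/-- The set `B` of receiver policies: conditional distributions of `X̂` given `Y`. -/
def receiverSet (X Y : Type*) [Fintype X] [Fintype Y] : Set (X × Y → ℝ) :=
  {β | (∀ t, 0 ≤ β t ∧ β t ≤ 1) ∧ ∀ y, ∑ x, β (x, y) = 1}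

/-- Expected distortion `ξ(α, β) = E{d(X, X̂)}`. -/
def xi (d : X × X → ℝ) (p : X × X × W → ℝ) (α : Y × X × W → ℝ) (β : X × Y → ℝ) : ℝ :=
  ∑ x, ∑ x', ∑ y, ∑ z, ∑ w, d (x, x') * β (x', y) * α (y, z, w) * p (x, z, w)

/-- Joint distribution `P_α(y, w)` of `(Y, W)` induced by the sender policy `α`. -/
def Pyw (p : X × X × W → ℝ) (α : Y × X × W → ℝ) (y : Y) (w : W) : ℝ :=
  ∑ z, ∑ x, α (y, z, w) * p (x, z, w)

/-- Marginal distribution `P_α(y)` of `Y` induced by the sender policy `α`. -/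
def Py (p : X × X × W → ℝ) (α : Y × X × W → ℝ) (y : Y) : ℝ :=
  ∑ w, Pyw p α y w

/-- Marginal distribution `q(w)` of the private information `W`. -/
def qW (p : X × X × W → ℝ) (w : W) : ℝ := ∑ z, ∑ x, p (x, z, w)

/-- Mutual information `ζ(α) = I(Y; W)`.  Summands with `P_α(y, w) = 0` automatically
vanish since they are multiplied by `P_α(y, w) = 0`. -/
def zeta (p : X × X × W → ℝ) (α : Y × X × W → ℝ) : ℝ :=
  ∑ y, ∑ w, Pyw p α y w * Real.log (Pyw p α y w / (Py p α y * qW p w))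

/-- Sender cost `U(α, β) = ξ(α, β) + ρ ζ(α)`. -/
def Ucost (d : X × X → ℝ) (p : X × X × W → ℝ) (ρ : ℝ)
    (α : Y × X × W → ℝ) (β : X × Y → ℝ) : ℝ :=
  xi d p α β + ρ * zeta p α

/-- Receiver cost `V(α, β) = ξ(α, β)`. -/
def Vcost (d : X × X → ℝ) (p : X × X × W → ℝ)
    (α : Y × X × W → ℝ) (β : X × Y → ℝ) : ℝ :=
  xi d p α β

/-- Potential function `Ψ(α, β) = ξ(α, β) + ρ ζ(α)`. -/
def Psi (d : X × X → ℝ) (p : X × X × W → ℝ) (ρ : ℝ)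
    (α : Y × X × W → ℝ) (β : X × Y → ℝ) : ℝ :=
  xi d p α β + ρ * zeta p α

/-- `(α, β)` is a Nash equilibrium of the privacy game. -/
def IsNash (d : X × X → ℝ) (p : X × X × W → ℝ) (ρ : ℝ)
    (α : Y × X × W → ℝ) (β : X × Y → ℝ) : Prop :=
  α ∈ senderSet X W Y ∧ β ∈ receiverSet X Y ∧
    (∀ α' ∈ senderSet X W Y, Ucost d p ρ α β ≤ Ucost d p ρ α' β) ∧
    (∀ β' ∈ receiverSet X Y, Vcost d p α β ≤ Vcost d p α β')

/-- `(α, β)` is an `ε`-Nash equilibrium of the privacy game. -/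
def IsEpsNash (d : X × X → ℝ) (p : X × X × W → ℝ) (ρ ε : ℝ)
    (α : Y × X × W → ℝ) (β : X × Y → ℝ) : Prop :=
  α ∈ senderSet X W Y ∧ β ∈ receiverSet X Y ∧
    (∀ α' ∈ senderSet X W Y, Ucost d p ρ α β ≤ Ucost d p ρ α' β + ε) ∧
    (∀ β' ∈ receiverSet X Y, Vcost d p α β ≤ Vcost d p α β' + ε)

lemma my_sum3_comm {A B C : Type*} [Fintype A] [Fintype B] [Fintype C] (f : A → B → C → ℝ) :
    ∑ c, ∑ b, ∑ a, f a b c = ∑ a, ∑ b, ∑ c, f a b c := by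
  rw [Finset.sum_comm, Finset.sum_congr rfl fun b _ => Finset.sum_comm]
  exact Finset.sum_comm

lemma my_gibbs {ι : Type*} (s : Finset ι) (a b : ι → ℝ)
    (ha : ∀ i ∈ s, 0 ≤ a i) (hb : ∀ i ∈ s, 0 ≤ b i)
    (hab : ∀ i ∈ s, 0 < a i → 0 < b i)
    (hsum : ∑ i ∈ s, b i ≤ ∑ i ∈ s, a i) :
    0 ≤ ∑ i ∈ s, a i * Real.log (a i / b i) := by
  have key : ∀ i ∈ s, a i - b i ≤ a i * Real.log (a i / b i) := by
    intro i hi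
    rcases eq_or_lt_of_le (ha i hi) with h | h
    · rw [← h]
      simpa using hb i hi
    · have hbpos := hab i hi h
      have hlog : Real.log (b i / a i) ≤ b i / a i - 1 :=
        Real.log_le_sub_one_of_pos (by positivity)
      rw [Real.log_div hbpos.ne' h.ne'] at hlog
      have h1 : 1 - b i / a i ≤ Real.log (a i / b i) := by
        rw [Real.log_div h.ne' hbpos.ne']; linarith
      have h2 : a i * (1 - b i / a i) = a i - b i := by field_simp
      have h3 : a i * (1 - b i / a i) ≤ a i * Real.log (a i / b i) :=
        mul_le_mul_of_nonneg_left h1 h.le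
      linarith
  calc (0:ℝ) ≤ ∑ i ∈ s, (a i - b i) := by rw [Finset.sum_sub_distrib]; linarith
    _ ≤ _ := Finset.sum_le_sum key

set_option maxHeartbeats 1000000 in
/-- the babbling equilibrium.  With the 0–1 distance, the uniform sender
policy `α*` together with the receiver policy `β*` that deterministically outputs an
ex-ante most likely value `x̂*` is a Nash equilibrium. -/
theorem babbling_equilibrium [Nonempty X] [Nonempty W] [Nonempty Y] [DecidableEq X]
    (p : X × X × W → ℝ) (hp0 : ∀ t, 0 ≤ p t)
    (hp1 : ∑ x, ∑ z, ∑ w, p (x, z, w) = 1)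
    (ρ : ℝ) (hρ : 0 ≤ ρ)
    (d : X × X → ℝ) (hd : ∀ x x', d (x, x') = if x = x' then 0 else 1)
    (αstar : Y × X × W → ℝ) (hα : ∀ t, αstar t = 1 / (Fintype.card Y : ℝ))
    (xstar : X) (hxstar : ∀ x, ∑ z, ∑ w, p (x, z, w) ≤ ∑ z, ∑ w, p (xstar, z, w))
    (βstar : X × Y → ℝ) (hβ : ∀ t, βstar t = if t.1 = xstar then 1 else 0) :
    αstar ∈ senderSet X W Y ∧ βstar ∈ receiverSet X Y ∧ IsNash d p ρ αstar βstar := by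
  set c : ℝ := (Fintype.card Y : ℝ) with hcdef
  have hc : 0 < c := by
    rw [hcdef]; exact_mod_cast (Fintype.card_pos (α := Y))
  have hc1 : (1:ℝ) ≤ c := by
    rw [hcdef]; exact_mod_cast Nat.one_le_iff_ne_zero.mpr (Fintype.card_ne_zero (α := Y))
  -- membership of αstar
  have hαA : αstar ∈ senderSet X W Y := by
    refine ⟨fun t => ⟨by rw [hα]; positivity, by rw [hα]; exact div_le_one_of_le₀ hc1 hc.le⟩,
      fun z w => ?_⟩
    simp only [hα, Finset.sum_const, card_univ, nsmul_eq_mul]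
    field_simp
    exact hcdef.symm
  have hβB : βstar ∈ receiverSet X Y := by
    refine ⟨fun t => by rw [hβ]; split <;> norm_num, fun y => ?_⟩
    simp [hβ]
  -- marginal of W
  have hq0 : ∀ w, 0 ≤ qW p w := fun w =>
    Finset.sum_nonneg fun z _ => Finset.sum_nonneg fun x _ => hp0 _
  have hq1 : ∑ w, qW p w = 1 := by
    unfold qW
    rw [my_sum3_comm (fun x z w => p (x, z, w))]
    exact hp1
  -- Pyw for αstar
  have hPyw : ∀ (y : Y) (w : W), Pyw p αstar y w = qW p w / c := by
    intro y w
    unfold Pyw qW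
    rw [eq_div_iff hc.ne', Finset.sum_mul]
    refine Finset.sum_congr rfl fun z _ => ?_
    rw [Finset.sum_mul]
    refine Finset.sum_congr rfl fun x _ => ?_
    rw [hα]; field_simp
  have hPy : ∀ y : Y, Py p αstar y = 1 / c := by
    intro y
    unfold Py
    simp only [hPyw]
    rw [← Finset.sum_div, hq1]
  -- zeta αstar = 0
  have hzeta0 : zeta p αstar = 0 := by
    unfold zeta
    refine Finset.sum_eq_zero fun y _ => Finset.sum_eq_zero fun w _ => ?_
    rw [hPyw, hPy]
    rcases eq_or_lt_of_le (hq0 w) with h | h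
    · rw [← h]; simp
    · have : qW p w / c / (1 / c * qW p w) = 1 := by field_simp
      rw [this, Real.log_one, mul_zero]
  -- Pyw facts for an arbitrary sender policy
  have hPyw0 : ∀ α' ∈ senderSet X W Y, ∀ (y : Y) (w : W), 0 ≤ Pyw p α' y w := by
    intro α' hA y w
    exact Finset.sum_nonneg fun z _ => Finset.sum_nonneg fun x _ =>
      mul_nonneg (hA.1 _).1 (hp0 _)
  have hPywle : ∀ α' ∈ senderSet X W Y, ∀ (y : Y) (w : W), Pyw p α' y w ≤ qW p w := by
    intro α' hA y w
    refine Finset.sum_le_sum fun z _ => Finset.sum_le_sum fun x _ => ?_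
    calc α' (y, z, w) * p (x, z, w) ≤ 1 * p (x, z, w) :=
          mul_le_mul_of_nonneg_right (hA.1 _).2 (hp0 _)
      _ = p (x, z, w) := one_mul _
  have hPysum : ∀ α' ∈ senderSet X W Y, ∑ y, ∑ w, Pyw p α' y w = 1 := by
    intro α' hA
    have step : ∀ y, ∑ w, Pyw p α' y w = ∑ w, ∑ z, α' (y, z, w) * (∑ x, p (x, z, w)) := by
      intro y
      refine Finset.sum_congr rfl fun w _ => Finset.sum_congr rfl fun z _ => ?_
      rw [Finset.mul_sum]
    simp only [step]
    rw [my_sum3_comm (fun z w y => α' (y, z, w) * (∑ x, p (x, z, w)))]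
    have e1 : ∀ z : X, ∀ w : W, ∑ y, α' (y, z, w) * (∑ x, p (x, z, w)) = ∑ x, p (x, z, w) := by
      intro z w
      rw [← Finset.sum_mul, hA.2 z w, one_mul]
    simp only [e1]
    rw [my_sum3_comm (fun x w z => p (x, z, w))]
    rw [← hp1]
    exact Finset.sum_congr rfl fun x _ => Finset.sum_comm
  -- nonnegativity of zeta (Gibbs)
  have hzeta_nonneg : ∀ α' ∈ senderSet X W Y, 0 ≤ zeta p α' := by
    intro α' hA
    have hb1 : ∑ i : Y × W, Py p α' i.1 * qW p i.2 = 1 := by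
      rw [Fintype.sum_prod_type]
      have e : ∀ y : Y, ∑ w, Py p α' y * qW p w = Py p α' y := by
        intro y; rw [← Finset.mul_sum, hq1, mul_one]
      simp only [e]
      unfold Py
      exact hPysum α' hA
    have ha1 : ∑ i : Y × W, Pyw p α' i.1 i.2 = 1 := by
      rw [Fintype.sum_prod_type]; exact hPysum α' hA
    have key : zeta p α' = ∑ i : Y × W,
        Pyw p α' i.1 i.2 * Real.log (Pyw p α' i.1 i.2 / (Py p α' i.1 * qW p i.2)) := by
      rw [Fintype.sum_prod_type]; rfl
    have c1 : ∀ i : Y × W, i ∈ Finset.univ → 0 ≤ Pyw p α' i.1 i.2 := fun i _ =>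
      hPyw0 α' hA i.1 i.2
    have c2 : ∀ i : Y × W, i ∈ Finset.univ → 0 ≤ Py p α' i.1 * qW p i.2 := fun i _ =>
      mul_nonneg (Finset.sum_nonneg fun w _ => hPyw0 α' hA i.1 w) (hq0 i.2)
    have c3 : ∀ i : Y × W, i ∈ Finset.univ → 0 < Pyw p α' i.1 i.2 →
        0 < Py p α' i.1 * qW p i.2 := by
      intro i _ hpos
      refine mul_pos (lt_of_lt_of_le hpos ?_) (lt_of_lt_of_le hpos (hPywle α' hA i.1 i.2))
      exact Finset.single_le_sum (f := fun w => Pyw p α' i.1 w)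
        (fun w _ => hPyw0 α' hA i.1 w) (Finset.mem_univ i.2)
    have c4 : ∑ i : Y × W, Py p α' i.1 * qW p i.2 ≤ ∑ i : Y × W, Pyw p α' i.1 i.2 := by
      rw [ha1, hb1]
    have G := my_gibbs Finset.univ (fun i : Y × W => Pyw p α' i.1 i.2)
      (fun i => Py p α' i.1 * qW p i.2) c1 c2 c3 c4
    rw [key]; exact G
  -- xi against βstar is independent of the sender policy
  have hxiK : ∀ α' ∈ senderSet X W Y,
      xi d p α' βstar = ∑ x, d (x, xstar) * (∑ z, ∑ w, p (x, z, w)) := by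
    intro α' hA
    unfold xi
    refine Finset.sum_congr rfl fun x _ => ?_
    rw [Finset.sum_eq_single xstar
      (fun x' _ hne => Finset.sum_eq_zero fun y _ => Finset.sum_eq_zero fun z _ =>
        Finset.sum_eq_zero fun w _ => by rw [hβ]; simp [hne])
      (fun h => absurd (Finset.mem_univ xstar) h)]
    rw [my_sum3_comm (fun w z y =>
      d (x, xstar) * βstar (xstar, y) * α' (y, z, w) * p (x, z, w))]
    have e : ∀ (z : X) (w : W),
        ∑ y, d (x, xstar) * βstar (xstar, y) * α' (y, z, w) * p (x, z, w)
          = d (x, xstar) * p (x, z, w) := by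
      intro z w
      have e2 : ∀ y : Y, d (x, xstar) * βstar (xstar, y) * α' (y, z, w) * p (x, z, w)
          = (d (x, xstar) * p (x, z, w)) * α' (y, z, w) := by
        intro y
        have : βstar (xstar, y) = 1 := by rw [hβ]; simp
        rw [this]; ring
      rw [Finset.sum_congr rfl fun y _ => e2 y, ← Finset.mul_sum, hA.2 z w, mul_one]
    simp only [e]
    rw [Finset.sum_comm, Finset.mul_sum]
    exact Finset.sum_congr rfl fun z _ => (Finset.mul_sum _ _ _).symm
  -- value of ∑_x d(x, x') px(x)
  have hT : ∀ x' : X, ∑ x, d (x, x') * (∑ z, ∑ w, p (x, z, w))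
      = 1 - ∑ z, ∑ w, p (x', z, w) := by
    intro x'
    have e : ∀ x, d (x, x') * (∑ z, ∑ w, p (x, z, w))
        = (∑ z, ∑ w, p (x, z, w)) - (if x = x' then (∑ z, ∑ w, p (x, z, w)) else 0) := by
      intro x; rw [hd]; split <;> ring
    simp only [e]
    rw [Finset.sum_sub_distrib, hp1,
      Finset.sum_ite_eq' Finset.univ x' (fun x => ∑ z, ∑ w, p (x, z, w))]
    simp
  -- receiver-side form of xi against αstar
  have hform : ∀ β'' : X × Y → ℝ, xi d p αstar β''
      = ∑ y, ∑ x', β'' (x', y) * (1/c) * (∑ x, d (x, x') * (∑ z, ∑ w, p (x, z, w))) := by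
    intro β''
    unfold xi
    have e1 : ∀ (x x' : X) (y : Y),
        ∑ z, ∑ w, d (x, x') * β'' (x', y) * αstar (y, z, w) * p (x, z, w)
          = β'' (x', y) * (1/c) * (d (x, x') * (∑ z, ∑ w, p (x, z, w))) := by
      intro x x' y
      have e2 : ∀ (z : X) (w : W), d (x, x') * β'' (x', y) * αstar (y, z, w) * p (x, z, w)
          = (β'' (x', y) * (1/c) * d (x, x')) * p (x, z, w) := by
        intro z w; rw [hα]; ring
      simp only [e2]
      simp only [← Finset.mul_sum]
      ring
    simp only [e1]
    rw [my_sum3_comm (fun y x' x =>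
      β'' (x', y) * (1/c) * (d (x, x') * (∑ z, ∑ w, p (x, z, w))))]
    refine Finset.sum_congr rfl fun y _ => Finset.sum_congr rfl fun x' _ => ?_
    simp only [← Finset.mul_sum]
  -- receiver optimality
  have hxi_recv : ∀ β' ∈ receiverSet X Y, xi d p αstar βstar ≤ xi d p αstar β' := by
    intro β' hB
    rw [hxiK αstar hαA, hform β', hT xstar]
    have hstep : ∀ y : Y, (1/c) * (1 - ∑ z, ∑ w, p (xstar, z, w))
        ≤ ∑ x', β' (x', y) * (1/c) * (∑ x, d (x, x') * (∑ z, ∑ w, p (x, z, w))) := by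
      intro y
      have e3 : ∀ x' : X, β' (x', y) * ((1/c) * (1 - ∑ z, ∑ w, p (xstar, z, w)))
          ≤ β' (x', y) * (1/c) * (∑ x, d (x, x') * (∑ z, ∑ w, p (x, z, w))) := by
        intro x'
        rw [hT x', mul_assoc (β' (x', y))]
        refine mul_le_mul_of_nonneg_left ?_ (hB.1 _).1
        refine mul_le_mul_of_nonneg_left ?_ (by positivity)
        linarith [hxstar x']
      calc (1/c) * (1 - ∑ z, ∑ w, p (xstar, z, w))
          = (∑ x', β' (x', y)) * ((1/c) * (1 - ∑ z, ∑ w, p (xstar, z, w))) := by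
            rw [hB.2 y, one_mul]
        _ = ∑ x', β' (x', y) * ((1/c) * (1 - ∑ z, ∑ w, p (xstar, z, w))) :=
            Finset.sum_mul _ _ _
        _ ≤ _ := Finset.sum_le_sum fun x' _ => e3 x'
    calc 1 - ∑ z, ∑ w, p (xstar, z, w)
        = ∑ _y : Y, (1/c) * (1 - ∑ z, ∑ w, p (xstar, z, w)) := by
          rw [Finset.sum_const, card_univ, nsmul_eq_mul, ← hcdef, ← mul_assoc,
            mul_one_div, div_self hc.ne', one_mul]
      _ ≤ _ := Finset.sum_le_sum fun y _ => hstep y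
  refine ⟨hαA, hβB, hαA, hβB, ?_, ?_⟩
  · intro α' hA
    unfold Ucost
    rw [hzeta0, mul_zero, add_zero, hxiK αstar hαA, hxiK α' hA]
    have h := mul_nonneg hρ (hzeta_nonneg α' hA)
    linarith
  · intro β' hB
    unfold Vcost
    exact hxi_recv β' hB
end
end

section
/- Suppose 𝒴 = 𝒳 and let β' be the identity receiver policy, β'(x̂,y) = 1 if x̂ = y and 0 otherwise. For α ∈ A and β ∈ B define the composed policy γ(x̂,z,w) = ∑_{y} β(x̂,y)·α(y,z,w). Then γ ∈ A, ξ(γ,β') = ξ(α,β), and ζ(γ) ≤ ζ(α) (a data-processing inequality: post-processing the message at the receiver cannot increase the information leaked about W). -/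
open Finset

noncomputable section

variable {X W Y : Type*} [Fintype X] [Fintype W] [Fintype Y]

lemma sum_rot {A B C : Type*} [Fintype A] [Fintype B] [Fintype C] (f : A → B → C → ℝ) :
    ∑ a, ∑ b, ∑ c, f a b c = ∑ c, ∑ a, ∑ b, f a b c := by
  have h1 : ∀ a : A, ∑ b, ∑ c, f a b c = ∑ c, ∑ b, f a b c :=
    fun a => Finset.sum_comm
  simp_rw [h1]
  exact Finset.sum_comm

lemma sum_rot' {A B C : Type*} [Fintype A] [Fintype B] [Fintype C] (f : A → B → C → ℝ) :
    ∑ a, ∑ b, ∑ c, f a b c = ∑ b, ∑ c, ∑ a, f a b c := by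
  rw [sum_rot]
  exact sum_rot fun c a b => f a b c


lemma log_sum_ineq {I : Type*} (s : Finset I) (a b : I → ℝ)
    (ha : ∀ i ∈ s, 0 ≤ a i) (hb : ∀ i ∈ s, 0 ≤ b i)
    (h0 : ∀ i ∈ s, b i = 0 → a i = 0) :
    (∑ i ∈ s, a i) * Real.log ((∑ i ∈ s, a i) / (∑ i ∈ s, b i)) ≤
      ∑ i ∈ s, a i * Real.log (a i / b i) := by
  set A := ∑ i ∈ s, a i with hA
  set B := ∑ i ∈ s, b i with hB
  rcases (Finset.sum_nonneg ha).eq_or_lt with hA0 | hApos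
  · have hz : ∀ i ∈ s, a i = 0 := fun i hi =>
      (Finset.sum_eq_zero_iff_of_nonneg ha).1 hA0.symm i hi
    have hAz : A = 0 := hA0.symm
    rw [hAz]
    simp only [zero_mul]
    refine Finset.sum_nonneg fun i hi => ?_
    rw [hz i hi]; simp
  rcases (Finset.sum_nonneg hb).eq_or_lt with hB0 | hBpos
  · have hball : ∀ i ∈ s, b i = 0 :=
      fun i hi => (Finset.sum_eq_zero_iff_of_nonneg hb).1 hB0.symm i hi
    have : A = 0 := Finset.sum_eq_zero fun i hi => h0 i hi (hball i hi)
    exact absurd this hApos.ne'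
  set C := A / B with hC
  have hCpos : 0 < C := div_pos hApos hBpos
  have key : ∀ i ∈ s, a i * Real.log C + (a i - b i * C) ≤ a i * Real.log (a i / b i) := by
    intro i hi
    by_cases hai : a i = 0
    · rw [hai]
      simp only [zero_mul, zero_add, zero_sub, mul_zero]
      have : 0 ≤ b i * C := mul_nonneg (hb i hi) hCpos.le
      linarith
    · have hapos : 0 < a i := (ha i hi).lt_of_ne' hai
      have hbpos : 0 < b i := (hb i hi).lt_of_ne' (fun h => hai (h0 i hi h))
      have hbC : 0 < b i * C := mul_pos hbpos hCpos
      have hlog : Real.log (b i * C / a i) ≤ b i * C / a i - 1 :=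
        Real.log_le_sub_one_of_pos (by positivity)
      rw [Real.log_div hbC.ne' hapos.ne'] at hlog
      have hsplit : Real.log (a i / b i) = Real.log C + (Real.log (a i) - Real.log (b i * C)) := by
        rw [Real.log_div hapos.ne' hbpos.ne', Real.log_mul hbpos.ne' hCpos.ne']
        ring
      rw [hsplit]
      have h2 : a i - b i * C ≤ a i * (Real.log (a i) - Real.log (b i * C)) := by
        have := mul_le_mul_of_nonneg_left hlog hapos.le
        have heq : a i * (b i * C / a i - 1) = b i * C - a i := by
          field_simp
        nlinarith
      nlinarith
  calc A * Real.log (A / B) = ∑ i ∈ s, (a i * Real.log C + (a i - b i * C)) := by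
        rw [Finset.sum_add_distrib, ← Finset.sum_mul, Finset.sum_sub_distrib,
          ← Finset.sum_mul, ← hA, ← hB]
        have : B * C = A := by rw [hC]; field_simp [show B ≠ 0 from hBpos.ne']
        rw [this]; ring
    _ ≤ _ := Finset.sum_le_sum key

/-- with `𝒴 = 𝒳` and the identity receiver policy `β'`, the composed
policy `γ(x̂, z, w) = ∑_y β(x̂, y) α(y, z, w)` is a valid sender policy, it yields the
same expected distortion (`ξ(γ, β') = ξ(α, β)`), and it leaks no more information
(`ζ(γ) ≤ ζ(α)`): a data-processing inequality. -/
theorem composed_policy_data_processing [Nonempty X] [Nonempty W] [DecidableEq X]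
    (p : X × X × W → ℝ) (hp0 : ∀ t, 0 ≤ p t)
    (hp1 : ∑ x, ∑ z, ∑ w, p (x, z, w) = 1)
    (d : X × X → ℝ) (hd : ∀ t, 0 ≤ d t)
    (β' : X × X → ℝ) (hβ' : ∀ t, β' t = if t.1 = t.2 then 1 else 0)
    (α : X × X × W → ℝ) (hα : α ∈ senderSet X W X)
    (β : X × X → ℝ) (hβ : β ∈ receiverSet X X)
    (γ : X × X × W → ℝ) (hγ : ∀ x' z w, γ (x', z, w) = ∑ y, β (x', y) * α (y, z, w)) :
    γ ∈ senderSet X W X ∧ xi d p γ β' = xi d p α β ∧ zeta p γ ≤ zeta p α := by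
  obtain ⟨hα01, hαsum⟩ := hα
  obtain ⟨hβ01, hβsum⟩ := hβ
  have hγmem : γ ∈ senderSet X W X := by
    refine ⟨fun t => ?_, fun z w => ?_⟩
    · obtain ⟨x', z, w⟩ := t
      rw [hγ]
      constructor
      · exact Finset.sum_nonneg fun y _ =>
          mul_nonneg (hβ01 _).1 (hα01 _).1
      · calc ∑ y, β (x', y) * α (y, z, w) ≤ ∑ y, α (y, z, w) :=
              Finset.sum_le_sum fun y _ =>
                mul_le_of_le_one_left (hα01 _).1 (hβ01 _).2
          _ = 1 := hαsum z w
    · simp_rw [hγ]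
      rw [Finset.sum_comm]
      simp_rw [← Finset.sum_mul]
      simp [hβsum, hαsum z w]
  have hPywγ : ∀ x' w, Pyw p γ x' w = ∑ y, β (x', y) * Pyw p α y w := by
    intro x' w
    unfold Pyw
    simp_rw [hγ, Finset.sum_mul, Finset.mul_sum, mul_assoc]
    exact sum_rot fun z x y => β (x', y) * (α (y, z, w) * p (x, z, w))
  have hPyγ : ∀ x', Py p γ x' = ∑ y, β (x', y) * Py p α y := by
    intro x'
    unfold Py
    simp_rw [hPywγ, Finset.mul_sum]
    rw [Finset.sum_comm]
  have hPyw_nn : ∀ y w, 0 ≤ Pyw p α y w := fun y w =>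
    Finset.sum_nonneg fun z _ => Finset.sum_nonneg fun x _ =>
      mul_nonneg (hα01 _).1 (hp0 _)
  have hPy_nn : ∀ y, 0 ≤ Py p α y := fun y =>
    Finset.sum_nonneg fun w _ => hPyw_nn y w
  have hq_nn : ∀ w, 0 ≤ qW p w := fun w =>
    Finset.sum_nonneg fun z _ => Finset.sum_nonneg fun x _ => hp0 _
  have hPyw_le_Py : ∀ y w, Pyw p α y w ≤ Py p α y := fun y w =>
    Finset.single_le_sum (fun w' _ => hPyw_nn y w') (Finset.mem_univ w)
  have hPyw_le_q : ∀ y w, Pyw p α y w ≤ qW p w := by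
    intro y w
    unfold Pyw qW
    refine Finset.sum_le_sum fun z _ => Finset.sum_le_sum fun x _ => ?_
    exact mul_le_of_le_one_left (hp0 _) (hα01 _).2
  refine ⟨hγmem, ?_, ?_⟩
  · -- xi equality
    unfold xi
    simp_rw [hβ', hγ]
    refine Finset.sum_congr rfl fun x _ => ?_
    rw [Finset.sum_comm]
    refine Finset.sum_congr rfl fun y _ => ?_
    simp only [mul_ite, ite_mul, mul_one, mul_zero, zero_mul, Finset.sum_ite_irrel,
      Finset.sum_const_zero, Finset.sum_ite_eq', Finset.mem_univ, if_true]
    trans ∑ z, ∑ w', ∑ y', d (x, y) * β (y, y') * α (y', z, w') * p (x, z, w')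
    · refine Finset.sum_congr rfl fun z _ => Finset.sum_congr rfl fun w' _ => ?_
      rw [Finset.mul_sum, Finset.sum_mul]
      exact Finset.sum_congr rfl fun y' _ => by ring
    · exact sum_rot _
  · -- zeta inequality
    unfold zeta
    rw [Finset.sum_comm]
    rw [show (∑ y, ∑ w, Pyw p α y w * Real.log (Pyw p α y w / (Py p α y * qW p w)))
        = ∑ w, ∑ y, Pyw p α y w * Real.log (Pyw p α y w / (Py p α y * qW p w))
      from Finset.sum_comm]
    refine Finset.sum_le_sum fun w _ => ?_
    calc ∑ x', Pyw p γ x' w * Real.log (Pyw p γ x' w / (Py p γ x' * qW p w))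
        ≤ ∑ x', ∑ y, β (x', y) *
            (Pyw p α y w * Real.log (Pyw p α y w / (Py p α y * qW p w))) := by
          refine Finset.sum_le_sum fun x' _ => ?_
          have h0 : ∀ y ∈ (Finset.univ : Finset X),
              (fun y => β (x', y) * (Py p α y * qW p w)) y = 0 →
              (fun y => β (x', y) * Pyw p α y w) y = 0 := by
            intro y _ hb
            simp only at hb ⊢
            rcases mul_eq_zero.1 hb with h | h
            · rw [h, zero_mul]
            · rcases mul_eq_zero.1 h with h2 | h2
              · have hz : Pyw p α y w = 0 :=
                  le_antisymm ((hPyw_le_Py y w).trans_eq h2) (hPyw_nn y w)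
                rw [hz, mul_zero]
              · have hz : Pyw p α y w = 0 :=
                  le_antisymm ((hPyw_le_q y w).trans_eq h2) (hPyw_nn y w)
                rw [hz, mul_zero]
          have hls := log_sum_ineq Finset.univ
            (fun y => β (x', y) * Pyw p α y w)
            (fun y => β (x', y) * (Py p α y * qW p w))
            (fun y _ => mul_nonneg (hβ01 _).1 (hPyw_nn y w))
            (fun y _ => mul_nonneg (hβ01 _).1 (mul_nonneg (hPy_nn y) (hq_nn w)))
            h0
          have hsa : (∑ y, β (x', y) * Pyw p α y w) = Pyw p γ x' w :=
            (hPywγ x' w).symm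
          have hsb : (∑ y, β (x', y) * (Py p α y * qW p w)) = Py p γ x' * qW p w := by
            rw [hPyγ x', Finset.sum_mul]
            exact Finset.sum_congr rfl fun y _ => by ring
          rw [hsa, hsb] at hls
          refine hls.trans (le_of_eq (Finset.sum_congr rfl fun y _ => ?_))
          by_cases hby : β (x', y) = 0
          · simp [hby]
          · rw [mul_div_mul_left _ _ hby]
            ring
      _ = ∑ y, Pyw p α y w * Real.log (Pyw p α y w / (Py p α y * qW p w)) := by
          rw [Finset.sum_comm]
          refine Finset.sum_congr rfl fun y _ => ?_
          rw [← Finset.sum_mul, hβsum y, one_mul]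
end
end

section
/- Along any best-response trajectory (α^k,β^k)_{k≥0}, the potential is nonincreasing: Ψ(α^k,β^k) ≤ Ψ(α^{k-1},β^{k-1}) for every k ≥ 1. -/
open Finset

noncomputable section

variable {X W Y : Type*} [Fintype X] [Fintype W] [Fintype Y]

/-- A best-response trajectory (Algorithm 1): at odd steps the receiver best-responds
(and the sender keeps her policy), at even steps `k ≥ 2` the sender best-responds
(and the receiver keeps her policy). -/
def IsBRTraj (d : X × X → ℝ) (p : X × X × W → ℝ) (ρ : ℝ)
    (αs : ℕ → Y × X × W → ℝ) (βs : ℕ → X × Y → ℝ) : Prop :=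
  αs 0 ∈ senderSet X W Y ∧ βs 0 ∈ receiverSet X Y ∧
    (∀ k, 1 ≤ k → Odd k →
      βs k ∈ receiverSet X Y ∧
      (∀ β ∈ receiverSet X Y, Vcost d p (αs (k - 1)) (βs k) ≤ Vcost d p (αs (k - 1)) β) ∧
      αs k = αs (k - 1)) ∧
    (∀ k, 2 ≤ k → Even k →
      αs k ∈ senderSet X W Y ∧
      (∀ α ∈ senderSet X W Y,
        Ucost d p ρ (αs k) (βs (k - 1)) ≤ Ucost d p ρ α (βs (k - 1))) ∧
      βs k = βs (k - 1))

/-- the potential `Ψ` is nonincreasing along any best-response trajectory. -/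
theorem potential_nonincreasing_along_best_response [Nonempty X] [Nonempty W] [Nonempty Y]
    (p : X × X × W → ℝ) (hp0 : ∀ t, 0 ≤ p t)
    (hp1 : ∑ x, ∑ z, ∑ w, p (x, z, w) = 1)
    (d : X × X → ℝ) (hd : ∀ t, 0 ≤ d t)
    (ρ : ℝ) (hρ : 0 ≤ ρ)
    (αs : ℕ → Y × X × W → ℝ) (βs : ℕ → X × Y → ℝ)
    (htraj : IsBRTraj d p ρ αs βs) :
    ∀ k, 1 ≤ k → Psi d p ρ (αs k) (βs k) ≤ Psi d p ρ (αs (k - 1)) (βs (k - 1)) := by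
  
  obtain ⟨hα0, hβ0, hodd, heven⟩ := htraj
  intro k hk
  rcases Nat.even_or_odd k with hke | hko
  · -- even k, so k ≥ 2: sender best-responds
    have hmod := Nat.even_iff.mp hke
    have hk2 : 2 ≤ k := by omega
    obtain ⟨hαk, hbest, hβeq⟩ := heven k hk2 hke
    have hodd1 : Odd (k - 1) := by rcases hke with ⟨m, hm⟩; exact ⟨m - 1, by omega⟩
    obtain ⟨_, _, hαeq⟩ := hodd (k - 1) (by omega) hodd1
    have hαprev : αs (k - 1) ∈ senderSet X W Y := by
      rw [hαeq]
      rcases eq_or_lt_of_le hk2 with h2 | h2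
      · simpa [← h2] using hα0
      · have hev : Even (k - 1 - 1) := by rcases hke with ⟨m, hm⟩; exact ⟨m - 1, by omega⟩
        exact (heven (k - 1 - 1) (by omega) hev).1
    have h := hbest (αs (k - 1)) hαprev
    simp only [Psi, Ucost] at h ⊢
    rw [hβeq]
    exact h
  · -- odd k: receiver best-responds
    have hmod := Nat.odd_iff.mp hko
    obtain ⟨hβk, hbest, hαeq⟩ := hodd k hk hko
    have hβprev : βs (k - 1) ∈ receiverSet X Y := by
      rcases eq_or_lt_of_le hk with h1 | h1
      · simpa [← h1] using hβ0
      · have hev : Even (k - 1) := by rcases hko with ⟨m, hm⟩; exact ⟨m, by omega⟩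
        obtain ⟨_, _, hβeq⟩ := heven (k - 1) (by omega) hev
        rw [hβeq]
        have ho : Odd (k - 1 - 1) := by rcases hko with ⟨m, hm⟩; exact ⟨m - 1, by omega⟩
        exact (hodd (k - 1 - 1) (by omega) ho).1
    have h := hbest (βs (k - 1)) hβprev
    simp only [Psi, Vcost] at h ⊢
    rw [hαeq]
    linarith
end
end

section
/- Let ε > 0 and let (α^k,β^k)_{k≥0} be a best-response trajectory. For every k ≥ 3, if (α^k,β^k) ∉ 𝒩_ε then Ψ(α^{k+1},β^{k+1}) < Ψ(α^k,β^k) − ε. -/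
open Finset

noncomputable section

variable {X W Y : Type*} [Fintype X] [Fintype W] [Fintype Y]

/-- along a best-response trajectory, if the state at time `k ≥ 3` is not
an `ε`-Nash equilibrium, then the potential drops by more than `ε` at the next step. -/
theorem potential_drop_outside_eps_nash [Nonempty X] [Nonempty W] [Nonempty Y]
    (p : X × X × W → ℝ) (hp0 : ∀ t, 0 ≤ p t)
    (hp1 : ∑ x, ∑ z, ∑ w, p (x, z, w) = 1)
    (d : X × X → ℝ) (hd : ∀ t, 0 ≤ d t)
    (ρ : ℝ) (hρ : 0 ≤ ρ) (ε : ℝ) (hε : 0 < ε)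
    (αs : ℕ → Y × X × W → ℝ) (βs : ℕ → X × Y → ℝ)
    (htraj : IsBRTraj d p ρ αs βs) :
    ∀ k, 3 ≤ k → ¬ IsEpsNash d p ρ ε (αs k) (βs k) →
      Psi d p ρ (αs (k + 1)) (βs (k + 1)) < Psi d p ρ (αs k) (βs k) - ε := by
  intro k hk hnot
  obtain ⟨h0a, h0b, hodd, heven⟩ := htraj
  rcases Nat.even_or_odd k with hke | hko
  · -- k even, k ≥ 4
    obtain ⟨hαA, hαBR, hβeq⟩ := heven k (by omega) hke
    have hk1odd : Odd (k - 1) := by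
      rcases hke with ⟨m, hm⟩; exact ⟨m - 1, by omega⟩
    obtain ⟨hβB, -, -⟩ := hodd (k - 1) (by omega) hk1odd
    have hβkB : βs k ∈ receiverSet X Y := by rw [hβeq]; exact hβB
    have hsender : ∀ α' ∈ senderSet X W Y,
        Ucost d p ρ (αs k) (βs k) ≤ Ucost d p ρ α' (βs k) + ε := by
      intro α' hα'
      rw [hβeq]
      linarith [hαBR α' hα']
    have hrec : ∃ β' ∈ receiverSet X Y,
        Vcost d p (αs k) β' + ε < Vcost d p (αs k) (βs k) := by
      by_contra h
      push_neg at h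
      exact hnot ⟨hαA, hβkB, hsender, h⟩
    obtain ⟨β', hβ', hgt⟩ := hrec
    obtain ⟨hβB', hβBR', hαeq'⟩ := hodd (k + 1) (by omega) (Even.add_one hke)
    have hsub : k + 1 - 1 = k := rfl
    rw [hsub] at hβBR' hαeq'
    have h1 := hβBR' β' hβ'
    rw [Psi, Psi, hαeq']
    simp only [Vcost] at h1 hgt
    linarith
  · -- k odd
    obtain ⟨hβB, hβBR, hαeq⟩ := hodd k (by omega) hko
    have hk1even : Even (k - 1) := by
      rcases hko with ⟨m, hm⟩; exact ⟨m, by omega⟩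
    obtain ⟨hαA1, -, -⟩ := heven (k - 1) (by omega) hk1even
    have hαA : αs k ∈ senderSet X W Y := by rw [hαeq]; exact hαA1
    have hrecv : ∀ β' ∈ receiverSet X Y,
        Vcost d p (αs k) (βs k) ≤ Vcost d p (αs k) β' + ε := by
      intro β' hβ'
      have h2 := hβBR β' hβ'
      rw [← hαeq] at h2
      linarith
    have hsend : ∃ α' ∈ senderSet X W Y,
        Ucost d p ρ α' (βs k) + ε < Ucost d p ρ (αs k) (βs k) := by
      by_contra h
      push_neg at h
      exact hnot ⟨hαA, hβB, h, hrecv⟩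
    obtain ⟨α', hα', hgt⟩ := hsend
    obtain ⟨-, hαBR', hβeq'⟩ := heven (k + 1) (by omega) (Odd.add_one hko)
    have hsub : k + 1 - 1 = k := rfl
    rw [hsub] at hαBR' hβeq'
    have h1 := hαBR' α' hα'
    rw [hβeq']
    simp only [Psi, Ucost] at h1 hgt ⊢
    linarith
end
end

section
/- Let (α^k,β^k)_{k≥0} be a best-response trajectory. For every ε > 0 there exists K_ε ∈ ℕ such that (α^k,β^k) ∈ 𝒩_ε for all k ≥ K_ε; that is, the best-response dynamics reaches and remains in the set of ε-Nash equilibria after finitely many iterations. -/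
open Finset

noncomputable section

variable {X W Y : Type*} [Fintype X] [Fintype W] [Fintype Y]

lemma my_xi_nonneg (d : X × X → ℝ) (hd : ∀ t, 0 ≤ d t)
    (p : X × X × W → ℝ) (hp0 : ∀ t, 0 ≤ p t)
    (α : Y × X × W → ℝ) (hα : ∀ t, 0 ≤ α t)
    (β : X × Y → ℝ) (hβ : ∀ t, 0 ≤ β t) : 0 ≤ xi d p α β := by
  unfold xi
  refine Finset.sum_nonneg fun x _ => Finset.sum_nonneg fun x' _ =>
    Finset.sum_nonneg fun y _ => Finset.sum_nonneg fun z _ =>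
    Finset.sum_nonneg fun w _ => ?_
  exact mul_nonneg (mul_nonneg (mul_nonneg (hd _) (hβ _)) (hα _)) (hp0 _)

lemma my_qW_sum (p : X × X × W → ℝ)
    (hp1 : ∑ x, ∑ z, ∑ w, p (x, z, w) = 1) : ∑ w, qW p w = 1 := by
  unfold qW
  rw [← hp1]
  calc ∑ w, ∑ z, ∑ x, p (x, z, w)
      = ∑ z, ∑ w, ∑ x, p (x, z, w) := Finset.sum_comm
    _ = ∑ z, ∑ x, ∑ w, p (x, z, w) := Finset.sum_congr rfl fun z _ => Finset.sum_comm
    _ = ∑ x, ∑ z, ∑ w, p (x, z, w) := Finset.sum_comm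

lemma my_zeta_lb (p : X × X × W → ℝ) (hp0 : ∀ t, 0 ≤ p t)
    (hp1 : ∑ x, ∑ z, ∑ w, p (x, z, w) = 1)
    (α : Y × X × W → ℝ) (hα : α ∈ senderSet X W Y) :
    -((Fintype.card Y : ℝ) * (Fintype.card W : ℝ)) ≤ zeta p α := by
  obtain ⟨hα01, hαsum⟩ := hα
  have hq0 : ∀ w, 0 ≤ qW p w := fun w =>
    Finset.sum_nonneg fun z _ => Finset.sum_nonneg fun x _ => hp0 _
  have hq1 : ∀ w, qW p w ≤ 1 := by
    intro w
    rw [← my_qW_sum p hp1]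
    exact Finset.single_le_sum (f := fun w => qW p w) (fun w _ => hq0 w) (Finset.mem_univ w)
  have hPyw0 : ∀ y w, 0 ≤ Pyw p α y w := fun y w =>
    Finset.sum_nonneg fun z _ => Finset.sum_nonneg fun x _ =>
      mul_nonneg (hα01 _).1 (hp0 _)
  have hPyw_le_q : ∀ y w, Pyw p α y w ≤ qW p w := by
    intro y w
    refine Finset.sum_le_sum fun z _ => Finset.sum_le_sum fun x _ => ?_
    exact mul_le_of_le_one_left (hp0 _) (hα01 _).2
  have hPy0 : ∀ y, 0 ≤ Py p α y := fun y =>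
    Finset.sum_nonneg fun w _ => hPyw0 y w
  have hPy1 : ∀ y, Py p α y ≤ 1 := by
    intro y
    rw [← my_qW_sum p hp1]
    exact Finset.sum_le_sum fun w _ => hPyw_le_q y w
  have hterm : ∀ y w, -1 ≤ Pyw p α y w * Real.log (Pyw p α y w / (Py p α y * qW p w)) := by
    intro y w
    rcases eq_or_lt_of_le (hPyw0 y w) with h0 | hpos
    · rw [← h0, zero_mul]; norm_num
    · have hPy_pos : 0 < Py p α y :=
        lt_of_lt_of_le hpos
          (Finset.single_le_sum (f := fun w => Pyw p α y w) (fun w _ => hPyw0 y w)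
            (Finset.mem_univ w))
      have hq_pos : 0 < qW p w := lt_of_lt_of_le hpos (hPyw_le_q y w)
      have ha_pos : 0 < Py p α y * qW p w := mul_pos hPy_pos hq_pos
      have ha1 : Py p α y * qW p w ≤ 1 := by
        nlinarith [hPy1 y, hq1 w, hPy0 y, hq0 w]
      set t := Pyw p α y w with ht
      set a := Py p α y * qW p w with ha
      have hlog : Real.log (a / t) ≤ a / t - 1 :=
        Real.log_le_sub_one_of_pos (div_pos ha_pos hpos)
      have hlog2 : 1 - a / t ≤ Real.log (t / a) := by
        rw [Real.log_div (ne_of_gt hpos) (ne_of_gt ha_pos)]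
        rw [Real.log_div (ne_of_gt ha_pos) (ne_of_gt hpos)] at hlog
        linarith
      have : t * (1 - a / t) ≤ t * Real.log (t / a) :=
        mul_le_mul_of_nonneg_left hlog2 (le_of_lt hpos)
      have heq : t * (1 - a / t) = t - a := by
        field_simp
      nlinarith
  unfold zeta
  have : ∑ y : Y, ∑ w : W, (-1 : ℝ) ≤
      ∑ y, ∑ w, Pyw p α y w * Real.log (Pyw p α y w / (Py p α y * qW p w)) :=
    Finset.sum_le_sum fun y _ => Finset.sum_le_sum fun w _ => hterm y w
  calc -((Fintype.card Y : ℝ) * (Fintype.card W : ℝ))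
      = ∑ _y : Y, ∑ _w : W, (-1 : ℝ) := by
        simp [Finset.sum_const, Finset.card_univ, mul_comm]
    _ ≤ _ := this

/-- for every `ε > 0`, any best-response trajectory reaches and remains in
the set of `ε`-Nash equilibria after finitely many iterations. -/
theorem best_response_reaches_eps_nash [Nonempty X] [Nonempty W] [Nonempty Y]
    (p : X × X × W → ℝ) (hp0 : ∀ t, 0 ≤ p t)
    (hp1 : ∑ x, ∑ z, ∑ w, p (x, z, w) = 1)
    (d : X × X → ℝ) (hd : ∀ t, 0 ≤ d t)
    (ρ : ℝ) (hρ : 0 ≤ ρ)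
    (αs : ℕ → Y × X × W → ℝ) (βs : ℕ → X × Y → ℝ)
    (htraj : IsBRTraj d p ρ αs βs) :
    ∀ ε : ℝ, 0 < ε → ∃ K : ℕ, ∀ k, K ≤ k → IsEpsNash d p ρ ε (αs k) (βs k) := by
  obtain ⟨hA0, hB0, hodd, heven⟩ := htraj
  -- membership along the trajectory
  have hmem : ∀ k, αs k ∈ senderSet X W Y ∧ βs k ∈ receiverSet X Y := by
    intro k
    induction k with
    | zero => exact ⟨hA0, hB0⟩
    | succ n ih =>
      rcases Nat.even_or_odd (n + 1) with he | ho
      · have h2 : 2 ≤ n + 1 := by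
          rcases he with ⟨m, hm⟩; omega
        obtain ⟨hA, _, hB⟩ := heven (n + 1) h2 he
        rw [Nat.add_sub_cancel] at hB
        exact ⟨hA, hB ▸ ih.2⟩
      · obtain ⟨hB, _, hA⟩ := hodd (n + 1) (Nat.le_add_left 1 n) ho
        rw [Nat.add_sub_cancel] at hA
        exact ⟨hA ▸ ih.1, hB⟩
  set Φ : ℕ → ℝ := fun k => Psi d p ρ (αs k) (βs k) with hΦ
  -- Φ is antitone
  have hanti : Antitone Φ := by
    refine antitone_nat_of_succ_le fun k => ?_
    rcases Nat.even_or_odd (k + 1) with he | ho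
    · have h2 : 2 ≤ k + 1 := by rcases he with ⟨m, hm⟩; omega
      obtain ⟨hA, hbest, hB⟩ := heven (k + 1) h2 he
      rw [Nat.add_sub_cancel] at hbest hB
      have h1 := hbest (αs k) (hmem k).1
      show Psi d p ρ (αs (k + 1)) (βs (k + 1)) ≤ Psi d p ρ (αs k) (βs k)
      rw [hB]
      exact h1
    · obtain ⟨hB, hbest, hA⟩ := hodd (k + 1) (Nat.le_add_left 1 k) ho
      rw [Nat.add_sub_cancel] at hbest hA
      have h1 := hbest (βs k) (hmem k).2
      show Psi d p ρ (αs (k + 1)) (βs (k + 1)) ≤ Psi d p ρ (αs k) (βs k)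
      rw [hA]
      unfold Psi
      exact add_le_add_left h1 _
  -- Φ is bounded below
  have hbdd : ∀ k, -(ρ * ((Fintype.card Y : ℝ) * (Fintype.card W : ℝ))) ≤ Φ k := by
    intro k
    have h1 : 0 ≤ xi d p (αs k) (βs k) :=
      my_xi_nonneg d hd p hp0 _ (fun t => ((hmem k).1.1 t).1) _ (fun t => ((hmem k).2.1 t).1)
    have h2 : -(ρ * ((Fintype.card Y : ℝ) * (Fintype.card W : ℝ))) ≤ ρ * zeta p (αs k) := by
      have := my_zeta_lb p hp0 hp1 (αs k) (hmem k).1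
      nlinarith
    show -(ρ * ((Fintype.card Y : ℝ) * (Fintype.card W : ℝ))) ≤
      xi d p (αs k) (βs k) + ρ * zeta p (αs k)
    linarith
  -- Φ converges, so successive drops tend to 0
  have hbddB : BddBelow (Set.range Φ) := by
    refine ⟨-(ρ * ((Fintype.card Y : ℝ) * (Fintype.card W : ℝ))), ?_⟩
    rintro x ⟨k, rfl⟩
    exact hbdd k
  have hconv : Filter.Tendsto Φ Filter.atTop (nhds (⨅ k, Φ k)) :=
    tendsto_atTop_ciInf hanti hbddB
  have hconv' : Filter.Tendsto (fun k => Φ (k + 1)) Filter.atTop (nhds (⨅ k, Φ k)) :=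
    hconv.comp (Filter.tendsto_add_atTop_nat 1)
  have hdrop0 : Filter.Tendsto (fun k => Φ k - Φ (k + 1)) Filter.atTop (nhds 0) := by
    have := hconv.sub hconv'
    simpa using this
  intro ε hε
  have hev : ∀ᶠ k in Filter.atTop, Φ k - Φ (k + 1) < ε :=
    hdrop0.eventually_lt_const hε
  obtain ⟨K0, hK0⟩ := Filter.eventually_atTop.mp hev
  refine ⟨max K0 1, fun k hk => ?_⟩
  have hk1 : 1 ≤ k := le_trans (le_max_right _ _) hk
  have hkK0 : K0 ≤ k := le_trans (le_max_left _ _) hk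
  have hdropk : Φ k - Φ (k + 1) < ε := hK0 k hkK0
  refine ⟨(hmem k).1, (hmem k).2, ?_, ?_⟩
  · -- sender ε-best-response
    rcases Nat.even_or_odd k with he | ho
    · -- k even: sender exactly best responds at step k
      have h2 : 2 ≤ k := by rcases he with ⟨m, hm⟩; omega
      obtain ⟨_, hbest, hB⟩ := heven k h2 he
      intro α' hα'
      have := hbest α' hα'
      rw [← hB] at this
      linarith
    · -- k odd: use the drop from step k to k+1
      have he1 : Even (k + 1) := Odd.add_one ho
      obtain ⟨_, hbest, hB⟩ := heven (k + 1) (by omega) he1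
      rw [Nat.add_sub_cancel] at hbest hB
      intro α' hα'
      have h1 := hbest α' hα'
      have h2 : Φ (k + 1) = Ucost d p ρ (αs (k + 1)) (βs k) := by
        show Psi d p ρ (αs (k + 1)) (βs (k + 1)) = _
        rw [hB]; rfl
      have h3 : Φ k = Ucost d p ρ (αs k) (βs k) := rfl
      rw [h2] at hdropk
      rw [h3] at hdropk
      linarith
  · -- receiver ε-best-response
    rcases Nat.even_or_odd k with he | ho
    · -- k even: use the drop from step k to k+1 (receiver responds at k+1)
      obtain ⟨_, hbest, hA⟩ := hodd (k + 1) (Nat.le_add_left 1 k) (Even.add_one he)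
      rw [Nat.add_sub_cancel] at hbest hA
      intro β' hβ'
      have h1 := hbest β' hβ'
      have h2 : Φ (k + 1) = Vcost d p (αs k) (βs (k + 1)) + ρ * zeta p (αs k) := by
        show Psi d p ρ (αs (k + 1)) (βs (k + 1)) = _
        rw [hA]; rfl
      have h3 : Φ k = Vcost d p (αs k) (βs k) + ρ * zeta p (αs k) := rfl
      rw [h2, h3] at hdropk
      linarith
    · -- k odd: receiver exactly best responds at step k
      obtain ⟨_, hbest, hA⟩ := hodd k hk1 ho
      intro β' hβ'
      have := hbest β' hβ'
      rw [← hA] at this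
      linarith
end
end

section
/- Let ε > 0 and let (α^k,β^k)_{k≥0} be an ε-thresholded best-response trajectory. Then the potential is nonincreasing along the trajectory, and for every k ≥ 0, if (α^k,β^k) ∉ 𝒩_ε then Ψ(α^{k+2},β^{k+2}) < Ψ(α^k,β^k) − ε; that is, within every two consecutive iterations at a non-ε-Nash state the potential strictly decreases by more than ε. -/
open Finset

noncomputable section

variable {X W Y : Type*} [Fintype X] [Fintype W] [Fintype Y]

/-- An `ε`-thresholded best-response trajectory (Algorithm 2): at odd steps the
receiver switches to a best response only if it improves her cost by more than `ε`;
at even steps `k ≥ 2` the sender does likewise. -/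
def IsThreshBRTraj (d : X × X → ℝ) (p : X × X × W → ℝ) (ρ ε : ℝ)
    (αs : ℕ → Y × X × W → ℝ) (βs : ℕ → X × Y → ℝ) : Prop :=
  αs 0 ∈ senderSet X W Y ∧ βs 0 ∈ receiverSet X Y ∧
    (∀ k, 1 ≤ k → Odd k →
      αs k = αs (k - 1) ∧
      ∃ β' ∈ receiverSet X Y,
        (∀ β ∈ receiverSet X Y,
          Vcost d p (αs (k - 1)) β' ≤ Vcost d p (αs (k - 1)) β) ∧
        (ε < Vcost d p (αs (k - 1)) (βs (k - 1)) - Vcost d p (αs (k - 1)) β' →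
          βs k = β') ∧
        (¬ (ε < Vcost d p (αs (k - 1)) (βs (k - 1)) - Vcost d p (αs (k - 1)) β') →
          βs k = βs (k - 1))) ∧
    (∀ k, 2 ≤ k → Even k →
      βs k = βs (k - 1) ∧
      ∃ α' ∈ senderSet X W Y,
        (∀ α ∈ senderSet X W Y,
          Ucost d p ρ α' (βs (k - 1)) ≤ Ucost d p ρ α (βs (k - 1))) ∧
        (ε < Ucost d p ρ (αs (k - 1)) (βs (k - 1)) - Ucost d p ρ α' (βs (k - 1)) →
          αs k = α') ∧
        (¬ (ε < Ucost d p ρ (αs (k - 1)) (βs (k - 1)) - Ucost d p ρ α' (βs (k - 1))) →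
          αs k = αs (k - 1)))

/-- along an `ε`-thresholded best-response trajectory the potential is
nonincreasing, and from any state that is not an `ε`-Nash equilibrium the potential
strictly decreases by more than `ε` within two iterations. -/
theorem thresholded_potential_decrease [Nonempty X] [Nonempty W] [Nonempty Y]
    (p : X × X × W → ℝ) (hp0 : ∀ t, 0 ≤ p t)
    (hp1 : ∑ x, ∑ z, ∑ w, p (x, z, w) = 1)
    (d : X × X → ℝ) (hd : ∀ t, 0 ≤ d t)
    (ρ : ℝ) (hρ : 0 ≤ ρ) (ε : ℝ) (hε : 0 < ε)
    (αs : ℕ → Y × X × W → ℝ) (βs : ℕ → X × Y → ℝ)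
    (htraj : IsThreshBRTraj d p ρ ε αs βs) :
    (∀ k, 1 ≤ k → Psi d p ρ (αs k) (βs k) ≤ Psi d p ρ (αs (k - 1)) (βs (k - 1))) ∧
    (∀ k, ¬ IsEpsNash d p ρ ε (αs k) (βs k) →
      Psi d p ρ (αs (k + 2)) (βs (k + 2)) < Psi d p ρ (αs k) (βs k) - ε) := by
  obtain ⟨hA0, hB0, hodd, heven⟩ := htraj
  -- membership of all iterates
  have hmem : ∀ k, αs k ∈ senderSet X W Y ∧ βs k ∈ receiverSet X Y := by
    intro k
    induction k with
    | zero => exact ⟨hA0, hB0⟩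
    | succ n ih =>
      have e : n + 1 - 1 = n := by omega
      rcases Nat.even_or_odd (n + 1) with he | ho
      · have h2 : 2 ≤ n + 1 := by
          rcases he with ⟨m, hm⟩; omega
        obtain ⟨hβ, α', hα'A, _, ht1, ht2⟩ := heven (n + 1) h2 he
        rw [e] at hβ ht1 ht2
        refine ⟨?_, hβ ▸ ih.2⟩
        by_cases hc : ε < Ucost d p ρ (αs n) (βs n) - Ucost d p ρ α' (βs n)
        · rw [ht1 hc]; exact hα'A
        · rw [ht2 hc]; exact ih.1
      · obtain ⟨hα, β', hB', _, ht1, ht2⟩ := hodd (n + 1) (by omega) ho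
        rw [e] at hα ht1 ht2
        refine ⟨hα ▸ ih.1, ?_⟩
        by_cases hc : ε < Vcost d p (αs n) (βs n) - Vcost d p (αs n) β'
        · rw [ht1 hc]; exact hB'
        · rw [ht2 hc]; exact ih.2
  -- monotonicity
  have hmono : ∀ k, 1 ≤ k →
      Psi d p ρ (αs k) (βs k) ≤ Psi d p ρ (αs (k - 1)) (βs (k - 1)) := by
    intro k hk
    rcases Nat.even_or_odd k with he | ho
    · have h2 : 2 ≤ k := by rcases he with ⟨m, hm⟩; omega
      obtain ⟨hβ, α', hα'A, hbest, ht1, ht2⟩ := heven k h2 he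
      by_cases hc : ε < Ucost d p ρ (αs (k - 1)) (βs (k - 1)) -
          Ucost d p ρ α' (βs (k - 1))
      · rw [ht1 hc, hβ]
        simp only [Psi, Ucost] at hc ⊢
        linarith
      · rw [ht2 hc, hβ]
    · obtain ⟨hα, β', hB', hbest, ht1, ht2⟩ := hodd k hk ho
      by_cases hc : ε < Vcost d p (αs (k - 1)) (βs (k - 1)) -
          Vcost d p (αs (k - 1)) β'
      · rw [ht1 hc, hα]
        simp only [Psi, Vcost] at hc ⊢
        linarith
      · rw [ht2 hc, hα]
  refine ⟨hmono, ?_⟩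
  intro k hnot
  have hmemk := hmem k
  have e1 : k + 1 - 1 = k := by omega
  have e2 : k + 2 - 1 = k + 1 := by omega
  rcases Nat.even_or_odd k with he | ho
  · -- k even : step k+1 is an odd (receiver) step, step k+2 an even (sender) step
    obtain ⟨hα1, β', hB', hbest, ht1, ht2⟩ := hodd (k + 1) (by omega) (Even.add_one he)
    rw [e1] at hα1 hbest ht1 ht2
    by_cases hc : ε < Vcost d p (αs k) (βs k) - Vcost d p (αs k) β'
    · have hβ1 := ht1 hc
      have h1 : Psi d p ρ (αs (k + 1)) (βs (k + 1)) < Psi d p ρ (αs k) (βs k) - ε := by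
        rw [hα1, hβ1]
        simp only [Psi, Vcost] at hc ⊢
        linarith
      have h2 := hmono (k + 2) (by omega)
      rw [e2] at h2
      linarith
    · have hβ1 := ht2 hc
      push_neg at hc
      have hrec : ∀ β ∈ receiverSet X Y,
          Vcost d p (αs k) (βs k) ≤ Vcost d p (αs k) β + ε := by
        intro β hβ
        have := hbest β hβ
        linarith
      have hsen : ¬ ∀ α' ∈ senderSet X W Y,
          Ucost d p ρ (αs k) (βs k) ≤ Ucost d p ρ α' (βs k) + ε := by
        intro h
        exact hnot ⟨hmemk.1, hmemk.2, h, hrec⟩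
      push_neg at hsen
      obtain ⟨α'', hα''A, hα''⟩ := hsen
      obtain ⟨hβ2, α', hα'A, hbest2, hs1, hs2⟩ :=
        heven (k + 2) (by omega) (by rcases he with ⟨m, hm⟩; exact ⟨m + 1, by omega⟩)
      rw [e2] at hβ2 hbest2 hs1 hs2
      have hU : Ucost d p ρ α' (βs (k + 1)) ≤ Ucost d p ρ α'' (βs (k + 1)) :=
        hbest2 α'' hα''A
      rw [hβ1] at hU
      have hcond : ε < Ucost d p ρ (αs (k + 1)) (βs (k + 1)) -
          Ucost d p ρ α' (βs (k + 1)) := by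
        rw [hα1, hβ1]
        linarith
      have hα2 := hs1 hcond
      rw [hα2, hβ2, hβ1]
      simp only [Psi, Ucost] at hα'' hU ⊢
      linarith
  · -- k odd : step k+1 is an even (sender) step, step k+2 an odd (receiver) step
    obtain ⟨hβ1, α', hα'A, hbest, ht1, ht2⟩ :=
      heven (k + 1) (by rcases ho with ⟨m, hm⟩; omega) (Odd.add_one ho)
    rw [e1] at hβ1 hbest ht1 ht2
    by_cases hc : ε < Ucost d p ρ (αs k) (βs k) - Ucost d p ρ α' (βs k)
    · have hα1 := ht1 hc
      have h1 : Psi d p ρ (αs (k + 1)) (βs (k + 1)) < Psi d p ρ (αs k) (βs k) - ε := by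
        rw [hα1, hβ1]
        simp only [Psi, Ucost] at hc ⊢
        linarith
      have h2 := hmono (k + 2) (by omega)
      rw [e2] at h2
      linarith
    · have hα1 := ht2 hc
      push_neg at hc
      have hsen : ∀ α ∈ senderSet X W Y,
          Ucost d p ρ (αs k) (βs k) ≤ Ucost d p ρ α (βs k) + ε := by
        intro α hα
        have := hbest α hα
        linarith
      have hrec : ¬ ∀ β' ∈ receiverSet X Y,
          Vcost d p (αs k) (βs k) ≤ Vcost d p (αs k) β' + ε := by
        intro h
        exact hnot ⟨hmemk.1, hmemk.2, hsen, h⟩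
      push_neg at hrec
      obtain ⟨β'', hβ''B, hβ''⟩ := hrec
      obtain ⟨hα2, β', hB', hbest2, hs1, hs2⟩ :=
        hodd (k + 2) (by omega) (by
          rcases ho with ⟨m, hm⟩; exact ⟨m + 1, by omega⟩)
      rw [e2] at hα2 hbest2 hs1 hs2
      have hV : Vcost d p (αs (k + 1)) β' ≤ Vcost d p (αs (k + 1)) β'' :=
        hbest2 β'' hβ''B
      rw [hα1] at hV
      have hcond : ε < Vcost d p (αs (k + 1)) (βs (k + 1)) -
          Vcost d p (αs (k + 1)) β' := by
        rw [hα1, hβ1]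
        linarith
      have hβ2 := hs1 hcond
      rw [hβ2, hα2, hα1]
      simp only [Psi, Vcost] at hβ'' hV ⊢
      linarith
end
end

section
/- Let ε > 0 and let (α^k,β^k)_{k≥0} be an ε-thresholded best-response trajectory. Then (α^k,β^k) ∈ 𝒩_ε for every k ∈ ℕ with k ≥ 3 + 2·Ψ(α^0,β^0)/ε; that is, the thresholded best-response dynamics reaches (and stays in) the set of ε-Nash equilibria within a number of iterations bounded explicitly in terms of the initial potential and ε. -/
open Finset

noncomputable section

variable {X W Y : Type*} [Fintype X] [Fintype W] [Fintype Y]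

lemma xi_nonneg (d : X × X → ℝ) (hd : ∀ t, 0 ≤ d t) (p : X × X × W → ℝ) (hp0 : ∀ t, 0 ≤ p t)
    {α : Y × X × W → ℝ} (hα : α ∈ senderSet X W Y) {β : X × Y → ℝ}
    (hβ : β ∈ receiverSet X Y) : 0 ≤ xi d p α β := by
  refine Finset.sum_nonneg fun x _ => Finset.sum_nonneg fun x' _ =>
    Finset.sum_nonneg fun y _ => Finset.sum_nonneg fun z _ => Finset.sum_nonneg fun w _ => ?_
  exact mul_nonneg (mul_nonneg (mul_nonneg (hd _) (hβ.1 _).1) (hα.1 _).1) (hp0 _)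

lemma zeta_nonneg (p : X × X × W → ℝ) (hp0 : ∀ t, 0 ≤ p t)
    (hp1 : ∑ x, ∑ z, ∑ w, p (x, z, w) = 1)
    {α : Y × X × W → ℝ} (hα : α ∈ senderSet X W Y) : 0 ≤ zeta p α := by
  have hPyw0 : ∀ y w, 0 ≤ Pyw p α y w := fun y w =>
    Finset.sum_nonneg fun z _ => Finset.sum_nonneg fun x _ =>
      mul_nonneg (hα.1 _).1 (hp0 _)
  have hq0 : ∀ w, 0 ≤ qW p w := fun w =>
    Finset.sum_nonneg fun z _ => Finset.sum_nonneg fun x _ => hp0 _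
  have hPy0 : ∀ y, 0 ≤ Py p α y := fun y => Finset.sum_nonneg fun w _ => hPyw0 y w
  have hPywq : ∀ y w, Pyw p α y w ≤ qW p w := fun y w =>
    Finset.sum_le_sum fun z _ => Finset.sum_le_sum fun x _ =>
      mul_le_of_le_one_left (hp0 _) (hα.1 _).2
  have hPywPy : ∀ y w, Pyw p α y w ≤ Py p α y := fun y w =>
    Finset.single_le_sum (fun w' _ => hPyw0 y w') (Finset.mem_univ w)
  have sumq : ∑ w, qW p w = 1 := by
    rw [← hp1]
    unfold qW
    rw [Finset.sum_comm]
    rw [show (∑ z, ∑ w, ∑ x, p (x, z, w)) = ∑ z, ∑ x, ∑ w, p (x, z, w) from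
      Finset.sum_congr rfl fun z _ => Finset.sum_comm]
    exact Finset.sum_comm
  have sumPyw : ∑ y, ∑ w, Pyw p α y w = 1 := by
    unfold Pyw
    have h1 : ∀ w z x, (∑ y, α (y, z, w) * p (x, z, w)) = p (x, z, w) := by
      intro w z x
      rw [← Finset.sum_mul, hα.2 z w, one_mul]
    calc ∑ y, ∑ w, ∑ z, ∑ x, α (y, z, w) * p (x, z, w)
        = ∑ w, ∑ y, ∑ z, ∑ x, α (y, z, w) * p (x, z, w) := Finset.sum_comm
      _ = ∑ w, ∑ z, ∑ y, ∑ x, α (y, z, w) * p (x, z, w) :=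
          Finset.sum_congr rfl fun w _ => Finset.sum_comm
      _ = ∑ w, ∑ z, ∑ x, ∑ y, α (y, z, w) * p (x, z, w) :=
          Finset.sum_congr rfl fun w _ => Finset.sum_congr rfl fun z _ => Finset.sum_comm
      _ = ∑ w, ∑ z, ∑ x, p (x, z, w) := by
          refine Finset.sum_congr rfl fun w _ => Finset.sum_congr rfl fun z _ =>
            Finset.sum_congr rfl fun x _ => h1 w z x
      _ = 1 := sumq
  have sumPy : ∑ y, Py p α y = 1 := sumPyw
  have sumg : ∑ y, ∑ w, Py p α y * qW p w = 1 := by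
    have : ∀ y, ∑ w, Py p α y * qW p w = Py p α y := by
      intro y
      rw [← Finset.mul_sum, sumq, mul_one]
    rw [Finset.sum_congr rfl fun y _ => this y, sumPy]
  have key : ∀ y w, Pyw p α y w - Py p α y * qW p w ≤
      Pyw p α y w * Real.log (Pyw p α y w / (Py p α y * qW p w)) := by
    intro y w
    rcases eq_or_lt_of_le (hPyw0 y w) with h0 | hpos
    · rw [← h0, zero_mul, zero_sub, neg_nonpos]
      exact mul_nonneg (hPy0 y) (hq0 w)
    · have hPy : 0 < Py p α y := lt_of_lt_of_le hpos (hPywPy y w)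
      have hq : 0 < qW p w := lt_of_lt_of_le hpos (hPywq y w)
      have hg : 0 < Py p α y * qW p w := mul_pos hPy hq
      have hlog : Real.log ((Py p α y * qW p w) / Pyw p α y w) ≤
          (Py p α y * qW p w) / Pyw p α y w - 1 :=
        Real.log_le_sub_one_of_pos (by positivity)
      have hneg : Real.log (Pyw p α y w / (Py p α y * qW p w)) =
          - Real.log ((Py p α y * qW p w) / Pyw p α y w) := by
        rw [← Real.log_inv, inv_div]
      rw [hneg]
      have h2 := mul_le_mul_of_nonneg_left hlog (le_of_lt hpos)
      have h3 : Pyw p α y w * ((Py p α y * qW p w) / Pyw p α y w) = Py p α y * qW p w :=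
        mul_div_cancel₀ _ (ne_of_gt hpos)
      nlinarith
  have hsum : ∑ y, ∑ w, (Pyw p α y w - Py p α y * qW p w) ≤ zeta p α :=
    Finset.sum_le_sum fun y _ => Finset.sum_le_sum fun w _ => key y w
  have : ∑ y, ∑ w, (Pyw p α y w - Py p α y * qW p w) = 0 := by
    simp only [Finset.sum_sub_distrib, sumPyw, sumg, sub_self]
  linarith

/-- an `ε`-thresholded best-response trajectory is at an `ε`-Nash
equilibrium at every iteration `k ≥ 3 + 2 Ψ(α⁰, β⁰) / ε`. -/

theorem thresholded_convergence_time [Nonempty X] [Nonempty W] [Nonempty Y]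
    (p : X × X × W → ℝ) (hp0 : ∀ t, 0 ≤ p t)
    (hp1 : ∑ x, ∑ z, ∑ w, p (x, z, w) = 1)
    (d : X × X → ℝ) (hd : ∀ t, 0 ≤ d t)
    (ρ : ℝ) (hρ : 0 ≤ ρ) (ε : ℝ) (hε : 0 < ε)
    (αs : ℕ → Y × X × W → ℝ) (βs : ℕ → X × Y → ℝ)
    (htraj : IsThreshBRTraj d p ρ ε αs βs) :
    ∀ k : ℕ, 3 + 2 * Psi d p ρ (αs 0) (βs 0) / ε ≤ (k : ℝ) →
      IsEpsNash d p ρ ε (αs k) (βs k) := by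
  obtain ⟨hα0, hβ0, hodd, heven⟩ := htraj
  -- every state of the trajectory consists of valid policies
  have hmem : ∀ k, αs k ∈ senderSet X W Y ∧ βs k ∈ receiverSet X Y := by
    intro k
    induction k with
    | zero => exact ⟨hα0, hβ0⟩
    | succ n ih =>
      rcases Nat.even_or_odd (n + 1) with he | ho
      · have h2 : 2 ≤ n + 1 := by rcases he with ⟨m, hm⟩; omega
        obtain ⟨hβeq, α', hα', hopt, hsw, hns⟩ := heven (n + 1) h2 he
        simp only [Nat.add_sub_cancel] at hβeq hopt hsw hns
        refine ⟨?_, by rw [hβeq]; exact ih.2⟩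
        by_cases hc : ε < Ucost d p ρ (αs n) (βs n) - Ucost d p ρ α' (βs n)
        · rw [hsw hc]; exact hα'
        · rw [hns hc]; exact ih.1
      · obtain ⟨hαeq, β', hβ', hopt, hsw, hns⟩ := hodd (n + 1) (by omega) ho
        simp only [Nat.add_sub_cancel] at hαeq hopt hsw hns
        refine ⟨by rw [hαeq]; exact ih.1, ?_⟩
        by_cases hc : ε < Vcost d p (αs n) (βs n) - Vcost d p (αs n) β'
        · rw [hsw hc]; exact hβ'
        · rw [hns hc]; exact ih.2
  -- one-step dichotomy: either the state is frozen and one player is ε-optimal,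
  -- or the potential decreases by more than ε
  have step : ∀ k, 1 ≤ k →
      (αs k = αs (k - 1) ∧ βs k = βs (k - 1) ∧
        ((Odd k ∧ ∀ β ∈ receiverSet X Y,
            Vcost d p (αs k) (βs k) ≤ Vcost d p (αs k) β + ε) ∨
         (Even k ∧ ∀ α ∈ senderSet X W Y,
            Ucost d p ρ (αs k) (βs k) ≤ Ucost d p ρ α (βs k) + ε))) ∨
      Psi d p ρ (αs k) (βs k) + ε ≤ Psi d p ρ (αs (k - 1)) (βs (k - 1)) := by
    intro k hk
    rcases Nat.even_or_odd k with he | ho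
    · have h2 : 2 ≤ k := by rcases he with ⟨m, hm⟩; omega
      obtain ⟨hβeq, α', hα', hopt, hsw, hns⟩ := heven k h2 he
      by_cases hc : ε < Ucost d p ρ (αs (k - 1)) (βs (k - 1)) - Ucost d p ρ α' (βs (k - 1))
      · right
        have hU : Psi d p ρ (αs k) (βs k) = Ucost d p ρ α' (βs (k - 1)) := by
          rw [hsw hc, hβeq]; rfl
        have hU0 : Psi d p ρ (αs (k - 1)) (βs (k - 1)) =
            Ucost d p ρ (αs (k - 1)) (βs (k - 1)) := rfl
        rw [hU, hU0]; linarith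
      · left
        have hαeq := hns hc
        refine ⟨hαeq, hβeq, Or.inr ⟨he, fun α hαA => ?_⟩⟩
        rw [hαeq, hβeq]
        linarith [not_lt.mp hc, hopt α hαA]
    · obtain ⟨hαeq, β', hβ', hopt, hsw, hns⟩ := hodd k hk ho
      by_cases hc : ε < Vcost d p (αs (k - 1)) (βs (k - 1)) - Vcost d p (αs (k - 1)) β'
      · right
        have e1 : Psi d p ρ (αs k) (βs k) =
            Vcost d p (αs (k - 1)) β' + ρ * zeta p (αs (k - 1)) := by
          rw [hsw hc, hαeq]; rfl
        have e0 : Psi d p ρ (αs (k - 1)) (βs (k - 1)) =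
            Vcost d p (αs (k - 1)) (βs (k - 1)) + ρ * zeta p (αs (k - 1)) := rfl
        rw [e1, e0]; linarith
      · left
        have hβeq := hns hc
        refine ⟨hαeq, hβeq, Or.inl ⟨ho, fun β hβB => ?_⟩⟩
        rw [hαeq, hβeq]
        linarith [not_lt.mp hc, hopt β hβB]
  -- the potential is non-increasing along the trajectory
  have mono : ∀ k, 1 ≤ k →
      Psi d p ρ (αs k) (βs k) ≤ Psi d p ρ (αs (k - 1)) (βs (k - 1)) := by
    intro k hk
    rcases step k hk with ⟨h1, h2, _⟩ | h
    · rw [h1, h2]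
    · linarith
  -- ε-Nash states are absorbing
  have absorb : ∀ m, IsEpsNash d p ρ ε (αs m) (βs m) →
      ∀ j, αs (m + j) = αs m ∧ βs (m + j) = βs m := by
    intro m hm j
    induction j with
    | zero => exact ⟨rfl, rfl⟩
    | succ j ih =>
      rcases Nat.even_or_odd (m + j + 1) with he | ho
      · have h2 : 2 ≤ m + j + 1 := by rcases he with ⟨t, ht⟩; omega
        obtain ⟨hβeq, α', hα', hopt, hsw, hns⟩ := heven (m + j + 1) h2 he
        simp only [Nat.add_sub_cancel] at hβeq hopt hsw hns
        have hc : ¬ ε < Ucost d p ρ (αs (m + j)) (βs (m + j)) -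
            Ucost d p ρ α' (βs (m + j)) := by
          rw [ih.1, ih.2]
          have := hm.2.2.1 α' hα'
          linarith
        exact ⟨(hns hc).trans ih.1, hβeq.trans ih.2⟩
      · obtain ⟨hαeq, β', hβ', hopt, hsw, hns⟩ := hodd (m + j + 1) (by omega) ho
        simp only [Nat.add_sub_cancel] at hαeq hopt hsw hns
        have hc : ¬ ε < Vcost d p (αs (m + j)) (βs (m + j)) -
            Vcost d p (αs (m + j)) β' := by
          rw [ih.1, ih.2]
          have := hm.2.2.2 β' hβ'
          linarith
        exact ⟨hαeq.trans ih.1, (hns hc).trans ih.2⟩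
  -- the potential is nonnegative
  have psinn : ∀ k, 0 ≤ Psi d p ρ (αs k) (βs k) := fun k =>
    add_nonneg (xi_nonneg d hd p hp0 (hmem k).1 (hmem k).2)
      (mul_nonneg hρ (zeta_nonneg p hp0 hp1 (hmem k).1))
  -- main induction: after 2n+1 steps, either an ε-Nash state was reached
  -- or the potential dropped by n·ε
  have main : ∀ n : ℕ,
      (∃ m, m ≤ 2 * n + 1 ∧ IsEpsNash d p ρ ε (αs m) (βs m)) ∨
      Psi d p ρ (αs (2 * n + 1)) (βs (2 * n + 1)) ≤
        Psi d p ρ (αs 0) (βs 0) - (n : ℝ) * ε := by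
    intro n
    induction n with
    | zero =>
      right
      have := mono 1 le_rfl
      simpa using this
    | succ n ih =>
      rcases ih with ⟨m, hm, hnash⟩ | hψ
      · exact Or.inl ⟨m, by omega, hnash⟩
      · have idx2 : 2 * n + 2 - 1 = 2 * n + 1 := by omega
        have idx3 : 2 * n + 3 - 1 = 2 * n + 2 := by omega
        have idxn : 2 * (n + 1) + 1 = 2 * n + 3 := by omega
        rcases step (2 * n + 2) (by omega) with ⟨hα2, hβ2, hcond2⟩ | hdec2
        · rw [idx2] at hα2 hβ2
          rcases step (2 * n + 3) (by omega) with ⟨hα3, hβ3, hcond3⟩ | hdec3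
          · left
            rw [idx3] at hα3 hβ3
            have hU : ∀ α ∈ senderSet X W Y,
                Ucost d p ρ (αs (2 * n + 2)) (βs (2 * n + 2)) ≤
                  Ucost d p ρ α (βs (2 * n + 2)) + ε := by
              rcases hcond2 with ⟨hodd', _⟩ | ⟨_, h⟩
              · exact absurd hodd' (by rw [Nat.odd_iff]; omega)
              · exact h
            have hV : ∀ β ∈ receiverSet X Y,
                Vcost d p (αs (2 * n + 2)) (βs (2 * n + 2)) ≤
                  Vcost d p (αs (2 * n + 2)) β + ε := by
              rcases hcond3 with ⟨_, h⟩ | ⟨heven', _⟩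
              · rw [hα3, hβ3] at h
                exact h
              · exact absurd heven' (by rw [Nat.even_iff]; omega)
            exact ⟨2 * n + 2, by omega, (hmem _).1, (hmem _).2, hU, hV⟩
          · right
            rw [idx3] at hdec3
            rw [idxn]
            have heq : Psi d p ρ (αs (2 * n + 2)) (βs (2 * n + 2)) =
                Psi d p ρ (αs (2 * n + 1)) (βs (2 * n + 1)) := by rw [hα2, hβ2]
            push_cast
            linarith
        · right
          rw [idx2] at hdec2
          have hmono3 := mono (2 * n + 3) (by omega)
          rw [idx3] at hmono3
          rw [idxn]
          push_cast
          linarith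
  intro k hk
  set Ψ0 := Psi d p ρ (αs 0) (βs 0) with hΨ0def
  have hΨ0 : 0 ≤ Ψ0 := psinn 0
  obtain ⟨n, hnε, hnle⟩ : ∃ n : ℕ, Ψ0 < (n : ℝ) * ε ∧ (n : ℝ) ≤ Ψ0 / ε + 1 := by
    refine ⟨⌊Ψ0 / ε⌋₊ + 1, ?_, ?_⟩
    · have h1 : Ψ0 / ε < (⌊Ψ0 / ε⌋₊ : ℝ) + 1 := Nat.lt_floor_add_one _
      have h2 := (div_lt_iff₀ hε).mp h1
      push_cast
      linarith
    · push_cast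
      linarith [Nat.floor_le (div_nonneg hΨ0 hε.le)]
  have hkn : 2 * n + 1 ≤ k := by
    have h3 : 2 * Ψ0 / ε = 2 * (Ψ0 / ε) := by ring
    have h2 : ((2 * n + 1 : ℕ) : ℝ) ≤ (k : ℝ) := by push_cast; linarith
    exact_mod_cast h2
  rcases main n with ⟨m, hm, hnash⟩ | hψ
  · obtain ⟨h1, h2⟩ := absorb m hnash (k - m)
    rw [show m + (k - m) = k from by omega] at h1 h2
    rw [h1, h2]
    exact hnash
  · exfalso
    have h0 := psinn (2 * n + 1)
    linarith
end
end

section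
/- The multi-sender privacy game admits Ψ'((α^(i))_i,β) = ξ'(β,(α^(i))_i) + ρ·∑_{i=1}^{n} ζ'_i(α^(i)) as an exact potential function: for all policy profiles, all β̄ ∈ B', every j ∈ {1,…,n} and all ᾱ^(j) ∈ A'_j, V((α^(i))_i,β) − V((α^(i))_i,β̄) = Ψ'((α^(i))_i,β) − Ψ'((α^(i))_i,β̄), and U_j((α^(i))_i,β) − U_j(ᾱ^(j),(α^(i))_{i≠j},β) = Ψ'((α^(i))_i,β) − Ψ'(ᾱ^(j),(α^(i))_{i≠j},β). -/
open Finset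

noncomputable section

variable {n : ℕ} {X : Type*} {Y W : Fin n → Type*}
  [Fintype X] [∀ i, Fintype (Y i)] [∀ i, Fintype (W i)]

/-- The set `A'_i` of policies for sender `i`: conditional distributions of
`Y_i` given `(Z_i, W_i)`. -/
def senderSet' (X : Type*) [Fintype X] {Y W : Fin n → Type*}
    [∀ i, Fintype (Y i)] [∀ i, Fintype (W i)] (i : Fin n) :
    Set (Y i × X × W i → ℝ) :=
  {α | (∀ t, 0 ≤ α t ∧ α t ≤ 1) ∧ ∀ z w, ∑ y, α (y, z, w) = 1}

/-- The set `B'` of receiver policies: conditional distributions of `X̂` given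
`(Y_1, …, Y_n)`. -/
def receiverSet' (X : Type*) [Fintype X] (Y : Fin n → Type*) [∀ i, Fintype (Y i)] :
    Set (X × (∀ i, Y i) → ℝ) :=
  {β | (∀ t, 0 ≤ β t ∧ β t ≤ 1) ∧ ∀ ys, ∑ x, β (x, ys) = 1}

/-- Expected distortion `ξ'(β, (α⁽ⁱ⁾)ᵢ) = E{d(X, X̂)}` in the multi-sender game. -/
def xi' (d : X × X → ℝ) (p : X × (Fin n → X) × (∀ i, W i) → ℝ)
    (a : ∀ i, Y i × X × W i → ℝ) (β : X × (∀ i, Y i) → ℝ) : ℝ :=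
  ∑ x, ∑ x', ∑ ys : ∀ i, Y i, ∑ zs : Fin n → X, ∑ ws : ∀ i, W i,
    d (x, x') * β (x', ys) * (∏ i, a i (ys i, zs i, ws i)) * p (x, zs, ws)

open Classical in
/-- The `(Z_i, W_i)`-marginal `m_i(z_i, w_i)` of `p`. -/
def margZW (p : X × (Fin n → X) × (∀ i, W i) → ℝ) (i : Fin n) (zi : X) (wi : W i) : ℝ :=
  ∑ x, ∑ zs : Fin n → X, ∑ ws : ∀ j, W j,
    if zs i = zi ∧ ws i = wi then p (x, zs, ws) else 0

open Classical in
/-- The `W_i`-marginal `q_i(w_i)` of `p`. -/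
def margW (p : X × (Fin n → X) × (∀ i, W i) → ℝ) (i : Fin n) (wi : W i) : ℝ :=
  ∑ x, ∑ zs : Fin n → X, ∑ ws : ∀ j, W j,
    if ws i = wi then p (x, zs, ws) else 0

/-- Joint distribution `P_i(y_i, w_i)` of `(Y_i, W_i)` induced by sender `i`'s policy. -/
def Pyw' (p : X × (Fin n → X) × (∀ i, W i) → ℝ) (i : Fin n)
    (α : Y i × X × W i → ℝ) (yi : Y i) (wi : W i) : ℝ :=
  ∑ zi, α (yi, zi, wi) * margZW p i zi wi

/-- Marginal distribution `P_i(y_i)` of `Y_i` induced by sender `i`'s policy. -/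
def Py' (p : X × (Fin n → X) × (∀ i, W i) → ℝ) (i : Fin n)
    (α : Y i × X × W i → ℝ) (yi : Y i) : ℝ :=
  ∑ wi, Pyw' p i α yi wi

/-- Mutual information `ζ'_i(α⁽ⁱ⁾) = I(Y_i; W_i)`.  Summands with `P_i(y_i, w_i) = 0`
automatically vanish since they are multiplied by `P_i(y_i, w_i) = 0`. -/
def zeta' (p : X × (Fin n → X) × (∀ i, W i) → ℝ) (i : Fin n)
    (α : Y i × X × W i → ℝ) : ℝ :=
  ∑ yi, ∑ wi, Pyw' p i α yi wi *
    Real.log (Pyw' p i α yi wi / (Py' p i α yi * margW p i wi))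

/-- Cost `U_j((α⁽ⁱ⁾)ᵢ, β) = ξ'(β, (α⁽ⁱ⁾)ᵢ) + ρ ζ'_j(α⁽ʲ⁾)` of sender `j`. -/
def Ucost' (d : X × X → ℝ) (p : X × (Fin n → X) × (∀ i, W i) → ℝ) (ρ : ℝ) (j : Fin n)
    (a : ∀ i, Y i × X × W i → ℝ) (β : X × (∀ i, Y i) → ℝ) : ℝ :=
  xi' d p a β + ρ * zeta' p j (a j)

/-- Receiver cost `V((α⁽ⁱ⁾)ᵢ, β) = ξ'(β, (α⁽ⁱ⁾)ᵢ)`. -/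
def Vcost' (d : X × X → ℝ) (p : X × (Fin n → X) × (∀ i, W i) → ℝ)
    (a : ∀ i, Y i × X × W i → ℝ) (β : X × (∀ i, Y i) → ℝ) : ℝ :=
  xi' d p a β

/-- Potential function `Ψ'((α⁽ⁱ⁾)ᵢ, β) = ξ'(β, (α⁽ⁱ⁾)ᵢ) + ρ ∑ᵢ ζ'_i(α⁽ⁱ⁾)`. -/
def Psi' (d : X × X → ℝ) (p : X × (Fin n → X) × (∀ i, W i) → ℝ) (ρ : ℝ)
    (a : ∀ i, Y i × X × W i → ℝ) (β : X × (∀ i, Y i) → ℝ) : ℝ :=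
  xi' d p a β + ρ * ∑ i, zeta' p i (a i)

/-- `((α⁽ⁱ⁾)ᵢ, β)` is a Nash equilibrium of the multi-sender privacy game. -/
def IsNash' (d : X × X → ℝ) (p : X × (Fin n → X) × (∀ i, W i) → ℝ) (ρ : ℝ)
    (a : ∀ i, Y i × X × W i → ℝ) (β : X × (∀ i, Y i) → ℝ) : Prop :=
  (∀ i, a i ∈ senderSet' X i) ∧ β ∈ receiverSet' X Y ∧
    (∀ j, ∀ ᾱ ∈ senderSet' X j,
      Ucost' d p ρ j a β ≤ Ucost' d p ρ j (Function.update a j ᾱ) β) ∧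
    (∀ β' ∈ receiverSet' X Y, Vcost' d p a β ≤ Vcost' d p a β')

/-- `((α⁽ⁱ⁾)ᵢ, β)` is an `ε`-Nash equilibrium of the multi-sender privacy game. -/
def IsEpsNash' (d : X × X → ℝ) (p : X × (Fin n → X) × (∀ i, W i) → ℝ) (ρ ε : ℝ)
    (a : ∀ i, Y i × X × W i → ℝ) (β : X × (∀ i, Y i) → ℝ) : Prop :=
  (∀ i, a i ∈ senderSet' X i) ∧ β ∈ receiverSet' X Y ∧
    (∀ j, ∀ ᾱ ∈ senderSet' X j,
      Ucost' d p ρ j a β ≤ Ucost' d p ρ j (Function.update a j ᾱ) β + ε) ∧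
    (∀ β' ∈ receiverSet' X Y, Vcost' d p a β ≤ Vcost' d p a β' + ε)

/-- `Ψ'((α⁽ⁱ⁾)ᵢ, β) = ξ'(β, (α⁽ⁱ⁾)ᵢ) + ρ ∑ᵢ ζ'_i(α⁽ⁱ⁾)` is an exact
potential function for the multi-sender privacy game. -/
theorem multi_sender_potential_game
    [Nonempty X] [∀ i, Nonempty (Y i)] [∀ i, Nonempty (W i)] (hn : 1 ≤ n)
    (p : X × (Fin n → X) × (∀ i, W i) → ℝ) (hp0 : ∀ t, 0 ≤ p t)
    (hp1 : ∑ x, ∑ zs : Fin n → X, ∑ ws : ∀ i, W i, p (x, zs, ws) = 1)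
    (d : X × X → ℝ) (hd : ∀ t, 0 ≤ d t)
    (ρ : ℝ) (hρ : 0 ≤ ρ) :
    ∀ (a : ∀ i, Y i × X × W i → ℝ), (∀ i, a i ∈ senderSet' X i) →
      ∀ β ∈ receiverSet' X Y, ∀ β' ∈ receiverSet' X Y,
        ∀ j : Fin n, ∀ ᾱ ∈ senderSet' X j,
          Vcost' d p a β - Vcost' d p a β' = Psi' d p ρ a β - Psi' d p ρ a β' ∧
          Ucost' d p ρ j a β - Ucost' d p ρ j (Function.update a j ᾱ) β =
            Psi' d p ρ a β - Psi' d p ρ (Function.update a j ᾱ) β := by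
  intro a ha β hβ β' hβ' j ᾱ hᾱ
  have hsum : ∑ i, zeta' p i (Function.update a j ᾱ i)
      = zeta' p j ᾱ + ∑ i ∈ Finset.univ.erase j, zeta' p i (a i) := by
    rw [← Finset.add_sum_erase _ _ (Finset.mem_univ j), Function.update_self]
    congr 1
    exact Finset.sum_congr rfl fun i hi =>
      by rw [Function.update_of_ne (Finset.ne_of_mem_erase hi)]
  have hsum2 : ∑ i, zeta' p i (a i)
      = zeta' p j (a j) + ∑ i ∈ Finset.univ.erase j, zeta' p i (a i) :=
    (Finset.add_sum_erase _ _ (Finset.mem_univ j)).symm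
  constructor
  · simp only [Vcost', Psi']; ring
  · simp only [Ucost', Psi', Function.update_self, hsum, hsum2]; ring
end
end

section
/- If ((α^(i),*)_i,β*) ∈ ∏_i A'_i × B' satisfies Ψ'((α^(i),*)_i,β*) ≤ Ψ'((α^(i))_i,β) for all ((α^(i))_i,β) ∈ ∏_i A'_i × B', then ((α^(i),*)_i,β*) is a Nash equilibrium of the multi-sender privacy game. -/
open Finset

noncomputable section

variable {n : ℕ} {X : Type*} {Y W : Fin n → Type*}
  [Fintype X] [∀ i, Fintype (Y i)] [∀ i, Fintype (W i)]

/-- any global minimizer of the potential `Ψ'` over `∏ᵢ A'_i × B'` is a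
Nash equilibrium of the multi-sender privacy game. -/
theorem multi_sender_potential_minimizer_is_nash
    [Nonempty X] [∀ i, Nonempty (Y i)] [∀ i, Nonempty (W i)] (hn : 1 ≤ n)
    (p : X × (Fin n → X) × (∀ i, W i) → ℝ) (hp0 : ∀ t, 0 ≤ p t)
    (hp1 : ∑ x, ∑ zs : Fin n → X, ∑ ws : ∀ i, W i, p (x, zs, ws) = 1)
    (d : X × X → ℝ) (hd : ∀ t, 0 ≤ d t)
    (ρ : ℝ) (hρ : 0 ≤ ρ)
    (astar : ∀ i, Y i × X × W i → ℝ) (βstar : X × (∀ i, Y i) → ℝ)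
    (hastar : ∀ i, astar i ∈ senderSet' X i) (hβstar : βstar ∈ receiverSet' X Y)
    (hmin : ∀ (a : ∀ i, Y i × X × W i → ℝ), (∀ i, a i ∈ senderSet' X i) →
      ∀ β ∈ receiverSet' X Y, Psi' d p ρ astar βstar ≤ Psi' d p ρ a β) :
    IsNash' d p ρ astar βstar := by
  refine ⟨hastar, hβstar, ?_, ?_⟩
  · intro j ᾱ hᾱ
    set u := Function.update astar j ᾱ with hu
    have hu_mem : ∀ i, u i ∈ senderSet' X i := by
      intro i
      by_cases h : i = j
      · subst h; simpa [hu] using hᾱ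
      · simpa [hu, Function.update_of_ne h] using hastar i
    have hPsi := hmin u hu_mem βstar hβstar
    have hsum_u : ∑ i, zeta' p i (u i)
        = zeta' p j ᾱ + ∑ i ∈ Finset.univ.erase j, zeta' p i (astar i) := by
      rw [← Finset.add_sum_erase _ _ (Finset.mem_univ j)]
      congr 1
      · simp [hu]
      · refine Finset.sum_congr rfl fun i hi => ?_
        rw [hu, Function.update_of_ne (Finset.mem_erase.mp hi).1]
    have hsum_a : ∑ i, zeta' p i (astar i)
        = zeta' p j (astar j) + ∑ i ∈ Finset.univ.erase j, zeta' p i (astar i) := by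
      rw [← Finset.add_sum_erase _ _ (Finset.mem_univ j)]
    simp only [Psi'] at hPsi
    rw [hsum_u, hsum_a] at hPsi
    simp only [Ucost', Vcost', hu, Function.update_self]
    rw [mul_add, mul_add] at hPsi
    linarith
  · intro β' hβ'
    have hPsi := hmin astar hastar β' hβ'
    simp only [Psi'] at hPsi
    simp only [Vcost']
    linarith
end
end

section
/- Let ε > 0 and let s = ((α^(i))_i,β) ∈ ∏_i A'_i × B'. Let β⁺ ∈ B' satisfy V((α^(i))_i,β⁺) ≤ V((α^(i))_i,β̄) for all β̄ ∈ B', and for each j ∈ {1,…,n} let α^(j)⁺ ∈ A'_j satisfy U_j(α^(j)⁺,(α^(i))_{i≠j},β) ≤ U_j(ᾱ^(j),(α^(i))_{i≠j},β) for all ᾱ^(j) ∈ A'_j. Define s_0 = ((α^(i))_i,β⁺) and, for j ∈ {1,…,n}, s_j = (α^(j)⁺,(α^(i))_{i≠j},β). Then Ψ'(s_j) ≤ Ψ'(s) for every j ∈ {0,1,…,n}, and if s ∉ 𝒩'_ε then ∑_{j=0}^{n} (Ψ'(s_j) − Ψ'(s)) < −ε; equivalently, the expected one-step change of the potential under a uniformly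 random choice of updating player is less than −ε/(n+1). -/
open Finset

noncomputable section

variable {n : ℕ} {X : Type*} {Y W : Fin n → Type*}
  [Fintype X] [∀ i, Fintype (Y i)] [∀ i, Fintype (W i)]

/-- one-step best responses never increase the potential `Ψ'`, and if the
current state `s = ((α⁽ⁱ⁾)ᵢ, β)` is not an `ε`-Nash equilibrium, then the sum over the
`n + 1` candidate unilateral best responses of the corresponding potential changes is
less than `-ε`; equivalently, the expected one-step change of the potential under a
uniformly random choice of the updating player is less than `-ε / (n + 1)`. -/
theorem multi_sender_expected_potential_drop
    [Nonempty X] [∀ i, Nonempty (Y i)] [∀ i, Nonempty (W i)] (hn : 1 ≤ n)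
    (p : X × (Fin n → X) × (∀ i, W i) → ℝ) (hp0 : ∀ t, 0 ≤ p t)
    (hp1 : ∑ x, ∑ zs : Fin n → X, ∑ ws : ∀ i, W i, p (x, zs, ws) = 1)
    (d : X × X → ℝ) (hd : ∀ t, 0 ≤ d t)
    (ρ : ℝ) (hρ : 0 ≤ ρ) (ε : ℝ) (hε : 0 < ε)
    (a : ∀ i, Y i × X × W i → ℝ) (β : X × (∀ i, Y i) → ℝ)
    (ha : ∀ i, a i ∈ senderSet' X i) (hβ : β ∈ receiverSet' X Y)
    (βplus : X × (∀ i, Y i) → ℝ) (hβplus : βplus ∈ receiverSet' X Y)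
    (hβplusmin : ∀ β' ∈ receiverSet' X Y, Vcost' d p a βplus ≤ Vcost' d p a β')
    (aplus : ∀ j, Y j × X × W j → ℝ) (haplus : ∀ j, aplus j ∈ senderSet' X j)
    (haplusmin : ∀ j : Fin n, ∀ ᾱ ∈ senderSet' X j,
      Ucost' d p ρ j (Function.update a j (aplus j)) β ≤
        Ucost' d p ρ j (Function.update a j ᾱ) β) :
    (Psi' d p ρ a βplus ≤ Psi' d p ρ a β) ∧
    (∀ j : Fin n, Psi' d p ρ (Function.update a j (aplus j)) β ≤ Psi' d p ρ a β) ∧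
    (¬ IsEpsNash' d p ρ ε a β →
      (Psi' d p ρ a βplus - Psi' d p ρ a β) +
        ∑ j : Fin n,
          (Psi' d p ρ (Function.update a j (aplus j)) β - Psi' d p ρ a β) < -ε) := by
  classical
  have hsum : ∀ (j : Fin n) (α : Y j × X × W j → ℝ),
      ∑ i, zeta' p i (Function.update a j α i)
        = zeta' p j α + ∑ i ∈ Finset.univ.erase j, zeta' p i (a i) := by
    intro j α
    rw [← Finset.add_sum_erase _ _ (Finset.mem_univ j), Function.update_self]
    congr 1
    exact Finset.sum_congr rfl fun i hi => by
      rw [Function.update_of_ne (Finset.ne_of_mem_erase hi)]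
  have hsum' : ∀ j : Fin n, ∑ i, zeta' p i (a i)
      = zeta' p j (a j) + ∑ i ∈ Finset.univ.erase j, zeta' p i (a i) := fun j =>
    (Finset.add_sum_erase _ _ (Finset.mem_univ j)).symm
  have hPsiU : ∀ (j : Fin n) (α : Y j × X × W j → ℝ),
      Psi' d p ρ (Function.update a j α) β - Psi' d p ρ a β
        = Ucost' d p ρ j (Function.update a j α) β - Ucost' d p ρ j a β := by
    intro j α
    simp only [Psi', Ucost', hsum j α, hsum' j, Function.update_self]
    ring
  have hUa : ∀ j : Fin n,
      Ucost' d p ρ j (Function.update a j (a j)) β = Ucost' d p ρ j a β := by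
    intro j; rw [Function.update_eq_self]
  have hPsiV : Psi' d p ρ a βplus - Psi' d p ρ a β
      = Vcost' d p a βplus - Vcost' d p a β := by
    simp only [Psi', Vcost']; ring
  have h1 : Psi' d p ρ a βplus ≤ Psi' d p ρ a β := by
    have := hβplusmin β hβ; linarith [hPsiV]
  have h2 : ∀ j, Psi' d p ρ (Function.update a j (aplus j)) β ≤ Psi' d p ρ a β := by
    intro j
    have hb := haplusmin j (a j) (ha j)
    rw [hUa j] at hb
    have hpd := hPsiU j (aplus j)
    linarith
  refine ⟨h1, h2, ?_⟩
  intro hne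
  rw [IsEpsNash'] at hne
  push_neg at hne
  have hne' := hne ha hβ
  by_cases hC : ∀ j, ∀ ᾱ ∈ senderSet' X j,
      Ucost' d p ρ j a β ≤ Ucost' d p ρ j (Function.update a j ᾱ) β + ε
  · obtain ⟨β', hβ', hv⟩ := hne' hC
    have hv2 := hβplusmin β' hβ'
    have hfirst : Psi' d p ρ a βplus - Psi' d p ρ a β < -ε := by
      linarith [hPsiV]
    have hsumle : ∑ j : Fin n,
        (Psi' d p ρ (Function.update a j (aplus j)) β - Psi' d p ρ a β) ≤ 0 :=
      Finset.sum_nonpos fun j _ => by linarith [h2 j]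
    linarith
  · push_neg at hC
    obtain ⟨j, ᾱ, hᾱ, hu⟩ := hC
    have hb := haplusmin j ᾱ hᾱ
    have hpd := hPsiU j (aplus j)
    have hUaj := hUa j
    have hj : Psi' d p ρ (Function.update a j (aplus j)) β - Psi' d p ρ a β < -ε := by
      linarith
    have hsplit : ∑ j' : Fin n,
        (Psi' d p ρ (Function.update a j' (aplus j')) β - Psi' d p ρ a β)
        = (Psi' d p ρ (Function.update a j (aplus j)) β - Psi' d p ρ a β)
          + ∑ j' ∈ Finset.univ.erase j,
            (Psi' d p ρ (Function.update a j' (aplus j')) β - Psi' d p ρ a β) :=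
      (Finset.add_sum_erase _ _ (Finset.mem_univ j)).symm
    have hrest : ∑ j' ∈ Finset.univ.erase j,
        (Psi' d p ρ (Function.update a j' (aplus j')) β - Psi' d p ρ a β) ≤ 0 :=
      Finset.sum_nonpos fun j' _ => by linarith [h2 j']
    linarith
end
end

section
/- Let Sβ : ∏_i A'_i → B' be a map with V(a,Sβ(a)) ≤ V(a,β̄) for all a ∈ ∏_i A'_i and β̄ ∈ B', and for each j ∈ {1,…,n} let S_j : (∏_i A'_i) × B' → A'_j be a map with U_j(S_j(a,β),(a_i)_{i≠j},β) ≤ U_j(ᾱ^(j),(a_i)_{i≠j},β) for all (a,β) and ᾱ^(j) ∈ A'_j. Fix an initial state s^0 ∈ ∏_i A'_i × B', and for ω : ℕ → {0,1,…,n} define s^k(ω) recursively for k ≥ 1: if ω(k) = 0 then s^k(ω) is s^{k-1}(ω) with its receiver component replaced by Sβ applied to the sender components of s^{k-1}(ω); if ω(k) = j ∈ {1,…,n} then s^k(ω) is s^{k-1}(ω) with its j-th sender component replaced by S_j applied to s^{k-1}(ω). Let μ be the infinite product over ℕ of the uniform probability measure on {0,1,…,n}. Then for every ε > 0, lim_{k→∞}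 μ{ω : s^k(ω) ∈ 𝒩'_ε} = 1. -/
open Finset

noncomputable section

variable {n : ℕ} {X : Type*} {Y W : Fin n → Type*}
  [Fintype X] [∀ i, Fintype (Y i)] [∀ i, Fintype (W i)]

section AuxLemmas

variable (p : X × (Fin n → X) × (∀ i, W i) → ℝ)

lemma aux_log_ineq {a b : ℝ} (ha : 0 ≤ a) (hb : 0 ≤ b) (h : b = 0 → a = 0) :
    a - b ≤ a * Real.log (a / b) := by
  rcases ha.eq_or_lt with h0 | h0
  · rw [← h0]; simpa using hb
  · have hbpos : 0 < b := by
      rcases hb.eq_or_lt with hb0 | hb0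
      · exact absurd (h hb0.symm) (by linarith)
      · exact hb0
    have hlog := Real.one_sub_inv_le_log_of_pos (x := a / b) (by positivity)
    have h2 : a * (1 - (a / b)⁻¹) ≤ a * Real.log (a / b) :=
      mul_le_mul_of_nonneg_left hlog h0.le
    have h3 : a * (1 - (a / b)⁻¹) = a - b := by
      rw [inv_div]; field_simp
    linarith

lemma margZW_nonneg (hp0 : ∀ t, 0 ≤ p t) (i : Fin n) (z : X) (w : W i) :
    0 ≤ margZW p i z w := by
  unfold margZW
  refine Finset.sum_nonneg fun _ _ => Finset.sum_nonneg fun _ _ =>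
    Finset.sum_nonneg fun _ _ => ?_
  split <;> simp [hp0]

lemma margW_nonneg (hp0 : ∀ t, 0 ≤ p t) (i : Fin n) (w : W i) :
    0 ≤ margW p i w := by
  unfold margW
  refine Finset.sum_nonneg fun _ _ => Finset.sum_nonneg fun _ _ =>
    Finset.sum_nonneg fun _ _ => ?_
  split <;> simp [hp0]

lemma sum_margZW (i : Fin n) (w : W i) : ∑ z, margZW p i z w = margW p i w := by
  classical
  unfold margZW margW
  rw [Finset.sum_comm]
  refine Finset.sum_congr rfl fun x _ => ?_
  rw [Finset.sum_comm]
  refine Finset.sum_congr rfl fun zs _ => ?_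
  rw [Finset.sum_comm]
  refine Finset.sum_congr rfl fun ws _ => ?_
  simp [ite_and, Finset.sum_ite_eq]

lemma sum_margW (hp1 : ∑ x, ∑ zs : Fin n → X, ∑ ws : ∀ i, W i, p (x, zs, ws) = 1)
    (i : Fin n) : ∑ w, margW p i w = 1 := by
  classical
  unfold margW
  rw [Finset.sum_comm, ← hp1]
  refine Finset.sum_congr rfl fun x _ => ?_
  rw [Finset.sum_comm]
  refine Finset.sum_congr rfl fun zs _ => ?_
  rw [Finset.sum_comm]
  refine Finset.sum_congr rfl fun ws _ => ?_
  simp [Finset.sum_ite_eq]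

lemma Pyw'_nonneg (hp0 : ∀ t, 0 ≤ p t) (i : Fin n) {α : Y i × X × W i → ℝ}
    (hα : α ∈ senderSet' X i) (y : Y i) (w : W i) : 0 ≤ Pyw' p i α y w :=
  Finset.sum_nonneg fun z _ => mul_nonneg (hα.1 _).1 (margZW_nonneg p hp0 i z w)

lemma Pyw'_le_margW (hp0 : ∀ t, 0 ≤ p t) (i : Fin n) {α : Y i × X × W i → ℝ}
    (hα : α ∈ senderSet' X i) (y : Y i) (w : W i) : Pyw' p i α y w ≤ margW p i w := by
  rw [← sum_margZW p i w]
  exact Finset.sum_le_sum fun z _ =>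
    mul_le_of_le_one_left (margZW_nonneg p hp0 i z w) (hα.1 (y, z, w)).2

lemma margW_le_one (hp0 : ∀ t, 0 ≤ p t)
    (hp1 : ∑ x, ∑ zs : Fin n → X, ∑ ws : ∀ i, W i, p (x, zs, ws) = 1)
    (i : Fin n) (w : W i) : margW p i w ≤ 1 := by
  rw [← sum_margW p hp1 i]
  exact Finset.single_le_sum (fun w' _ => margW_nonneg p hp0 i w') (Finset.mem_univ w)

lemma Py'_nonneg (hp0 : ∀ t, 0 ≤ p t) (i : Fin n) {α : Y i × X × W i → ℝ}
    (hα : α ∈ senderSet' X i) (y : Y i) : 0 ≤ Py' p i α y :=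
  Finset.sum_nonneg fun w _ => Pyw'_nonneg p hp0 i hα y w

lemma Py'_le_one (hp0 : ∀ t, 0 ≤ p t)
    (hp1 : ∑ x, ∑ zs : Fin n → X, ∑ ws : ∀ i, W i, p (x, zs, ws) = 1)
    (i : Fin n) {α : Y i × X × W i → ℝ}
    (hα : α ∈ senderSet' X i) (y : Y i) : Py' p i α y ≤ 1 := by
  rw [← sum_margW p hp1 i]
  exact Finset.sum_le_sum fun w _ => Pyw'_le_margW p hp0 i hα y w

lemma zeta'_lower (hp0 : ∀ t, 0 ≤ p t)
    (hp1 : ∑ x, ∑ zs : Fin n → X, ∑ ws : ∀ i, W i, p (x, zs, ws) = 1)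
    (i : Fin n) {α : Y i × X × W i → ℝ} (hα : α ∈ senderSet' X i) :
    -((Fintype.card (Y i) : ℝ) * (Fintype.card (W i) : ℝ)) ≤ zeta' p i α := by
  have key : ∀ y w, (-1 : ℝ) ≤ Pyw' p i α y w *
      Real.log (Pyw' p i α y w / (Py' p i α y * margW p i w)) := by
    intro y w
    have hPyw0 := Pyw'_nonneg p hp0 i hα y w
    have hPy0 := Py'_nonneg p hp0 i hα y
    have hq0 := margW_nonneg p hp0 i w
    have h1 := aux_log_ineq hPyw0 (mul_nonneg hPy0 hq0) (fun hz => by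
      rcases mul_eq_zero.1 hz with hz | hz
      · have hle : Pyw' p i α y w ≤ Py' p i α y :=
          Finset.single_le_sum (fun w' _ => Pyw'_nonneg p hp0 i hα y w')
            (Finset.mem_univ w)
        linarith
      · have hle := Pyw'_le_margW p hp0 i hα y w
        linarith)
    have h2 : Py' p i α y * margW p i w ≤ 1 :=
      mul_le_one₀ (Py'_le_one p hp0 hp1 i hα y) hq0 (margW_le_one p hp0 hp1 i w)
    linarith
  unfold zeta'
  calc -((Fintype.card (Y i) : ℝ) * (Fintype.card (W i) : ℝ))
      = ∑ _y : Y i, ∑ _w : W i, (-1 : ℝ) := by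
        simp [Finset.sum_const, Finset.card_univ]
    _ ≤ _ := Finset.sum_le_sum fun y _ => Finset.sum_le_sum fun w _ => key y w

lemma xi'_nonneg (hp0 : ∀ t, 0 ≤ p t) (d : X × X → ℝ) (hd : ∀ t, 0 ≤ d t)
    {a : ∀ i, Y i × X × W i → ℝ} {β : X × (∀ i, Y i) → ℝ}
    (ha : ∀ i, a i ∈ senderSet' X i) (hβ : β ∈ receiverSet' X Y) :
    0 ≤ xi' d p a β := by
  unfold xi'
  refine Finset.sum_nonneg fun x _ => Finset.sum_nonneg fun x' _ =>
    Finset.sum_nonneg fun ys _ => Finset.sum_nonneg fun zs _ =>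
    Finset.sum_nonneg fun ws _ => ?_
  exact mul_nonneg (mul_nonneg (mul_nonneg (hd _) (hβ.1 _).1)
    (Finset.prod_nonneg fun i _ => ((ha i).1 _).1)) (hp0 _)

lemma Psi'_update (d : X × X → ℝ) (ρ : ℝ) (a : ∀ i, Y i × X × W i → ℝ)
    (j : Fin n) (ᾱ : Y j × X × W j → ℝ) (β : X × (∀ i, Y i) → ℝ) :
    Psi' d p ρ (Function.update a j ᾱ) β =
      Psi' d p ρ a β +
        (Ucost' d p ρ j (Function.update a j ᾱ) β - Ucost' d p ρ j a β) := by
  classical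
  have h2 : ∑ i, zeta' p i (Function.update a j ᾱ i)
      = ∑ i, zeta' p i (a i) + (zeta' p j ᾱ - zeta' p j (a j)) := by
    have h : ∑ i, (zeta' p i (Function.update a j ᾱ i) - zeta' p i (a i))
        = zeta' p j ᾱ - zeta' p j (a j) := by
      rw [Finset.sum_eq_single j]
      · rw [Function.update_self]
      · intro i _ hij; rw [Function.update_of_ne hij]; ring
      · simp
    rw [Finset.sum_sub_distrib] at h
    linarith
  simp only [Psi', Ucost', Function.update_self, h2]
  ring

lemma Psi'_beta (d : X × X → ℝ) (ρ : ℝ) (a : ∀ i, Y i × X × W i → ℝ)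
    (β β' : X × (∀ i, Y i) → ℝ) :
    Psi' d p ρ a β' = Psi' d p ρ a β + (Vcost' d p a β' - Vcost' d p a β) := by
  simp only [Psi', Vcost']; ring

end AuxLemmas
open MeasureTheory Filter ENNReal in
/-- random-player best-response dynamics (Algorithm 3).  At each step a
player from `{0, 1, …, n}` (`0` = receiver, `j ≥ 1` = sender `j`) is chosen uniformly
and independently at random and best-responds.  Under the infinite product `μ` of the
uniform measure on `{0, 1, …, n}` — characterized by its values on cylinder sets —
the probability that the state at time `k` is an `ε`-Nash equilibrium tends to `1`. -/
theorem random_best_response_converges_in_probability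
    [Nonempty X] [∀ i, Nonempty (Y i)] [∀ i, Nonempty (W i)] (hn : 1 ≤ n)
    (p : X × (Fin n → X) × (∀ i, W i) → ℝ) (hp0 : ∀ t, 0 ≤ p t)
    (hp1 : ∑ x, ∑ zs : Fin n → X, ∑ ws : ∀ i, W i, p (x, zs, ws) = 1)
    (d : X × X → ℝ) (hd : ∀ t, 0 ≤ d t)
    (ρ : ℝ) (hρ : 0 ≤ ρ) (ε : ℝ) (hε : 0 < ε)
    -- the receiver's best-response map
    (Sβ : (∀ i, Y i × X × W i → ℝ) → (X × (∀ i, Y i) → ℝ))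
    (hSβ : ∀ a, Sβ a ∈ receiverSet' X Y ∧
      ∀ β' ∈ receiverSet' X Y, Vcost' d p a (Sβ a) ≤ Vcost' d p a β')
    -- the senders' best-response maps
    (Sa : ∀ j : Fin n,
      ((∀ i, Y i × X × W i → ℝ) × (X × (∀ i, Y i) → ℝ)) → (Y j × X × W j → ℝ))
    (hSa : ∀ (j : Fin n) (s : (∀ i, Y i × X × W i → ℝ) × (X × (∀ i, Y i) → ℝ)),
      Sa j s ∈ senderSet' X j ∧
      ∀ ᾱ ∈ senderSet' X j,
        Ucost' d p ρ j (Function.update s.1 j (Sa j s)) s.2 ≤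
          Ucost' d p ρ j (Function.update s.1 j ᾱ) s.2)
    -- the initial state, lying in `∏ᵢ A'_i × B'`
    (s0 : (∀ i, Y i × X × W i → ℝ) × (X × (∀ i, Y i) → ℝ))
    (hs0 : (∀ i, s0.1 i ∈ senderSet' X i) ∧ s0.2 ∈ receiverSet' X Y)
    -- the random trajectory: at step `k ≥ 1`, player `ω k` updates
    (traj : (ℕ → Fin (n + 1)) →
      ℕ → (∀ i, Y i × X × W i → ℝ) × (X × (∀ i, Y i) → ℝ))
    (htraj0 : ∀ ω, traj ω 0 = s0)
    (htrajS : ∀ ω k, traj ω (k + 1) =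
      Fin.cases
        (motive := fun _ => (∀ i, Y i × X × W i → ℝ) × (X × (∀ i, Y i) → ℝ))
        ((traj ω k).1, Sβ (traj ω k).1)
        (fun j => (Function.update (traj ω k).1 j (Sa j (traj ω k)), (traj ω k).2))
        (ω (k + 1)))
    -- `μ` is the infinite product of the uniform measure on `{0, 1, …, n}`,
    -- characterized by its values on cylinder sets
    (μ : Measure (ℕ → Fin (n + 1))) (hμprob : IsProbabilityMeasure μ)
    (hμ : ∀ (s : Finset ℕ) (v : ℕ → Fin (n + 1)),
      μ {ω | ∀ k ∈ s, ω k = v k} = (((n : ℝ≥0∞) + 1)⁻¹) ^ s.card) :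
    Tendsto (fun k => μ {ω | IsEpsNash' d p ρ ε (traj ω k).1 (traj ω k).2})
      atTop (nhds 1) := by
  classical
  -- validity of the trajectory
  have hvalid : ∀ ω k, (∀ i, (traj ω k).1 i ∈ senderSet' X i) ∧
      (traj ω k).2 ∈ receiverSet' X Y := by
    intro ω k
    induction k with
    | zero => rw [htraj0]; exact hs0
    | succ k ih =>
      rw [htrajS]
      rcases Fin.eq_zero_or_eq_succ (ω (k+1)) with h | ⟨j, h⟩
      · rw [h]; simp only [Fin.cases_zero]
        exact ⟨ih.1, (hSβ (traj ω k).1).1⟩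
      · rw [h]; simp only [Fin.cases_succ]
        refine ⟨fun i => ?_, ih.2⟩
        by_cases hij : i = j
        · subst hij; rw [Function.update_self]; exact (hSa i (traj ω k)).1
        · rw [Function.update_of_ne hij]; exact ih.1 i
  -- the potential decreases along the trajectory
  have hdec : ∀ ω k, Psi' d p ρ (traj ω (k+1)).1 (traj ω (k+1)).2 ≤
      Psi' d p ρ (traj ω k).1 (traj ω k).2 := by
    intro ω k
    rw [htrajS]
    rcases Fin.eq_zero_or_eq_succ (ω (k+1)) with h | ⟨j, h⟩
    · rw [h]; simp only [Fin.cases_zero]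
      rw [Psi'_beta p d ρ (traj ω k).1 (traj ω k).2 (Sβ (traj ω k).1)]
      have h1 := (hSβ (traj ω k).1).2 (traj ω k).2 (hvalid ω k).2
      linarith
    · rw [h]; simp only [Fin.cases_succ]
      rw [Psi'_update p d ρ (traj ω k).1 j (Sa j (traj ω k)) (traj ω k).2]
      have h1 := (hSa j (traj ω k)).2 ((traj ω k).1 j) ((hvalid ω k).1 j)
      rw [Function.update_eq_self] at h1
      linarith
  -- a non-equilibrium state has a player whose best response drops the potential by ε
  have hdrop : ∀ s : (∀ i, Y i × X × W i → ℝ) × (X × (∀ i, Y i) → ℝ),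
      (∀ i, s.1 i ∈ senderSet' X i) → s.2 ∈ receiverSet' X Y →
      ¬ IsEpsNash' d p ρ ε s.1 s.2 →
      ∃ j : Fin (n+1), ∀ ω k, traj ω k = s → ω (k+1) = j →
        Psi' d p ρ (traj ω (k+1)).1 (traj ω (k+1)).2 + ε ≤ Psi' d p ρ s.1 s.2 := by
    intro s hs1 hs2 hN
    by_cases h : ∃ j : Fin n, ∃ ᾱ ∈ senderSet' X j,
        Ucost' d p ρ j (Function.update s.1 j ᾱ) s.2 + ε < Ucost' d p ρ j s.1 s.2
    · obtain ⟨j, ᾱ, hm, hlt⟩ := h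
      refine ⟨j.succ, fun ω k hk hω => ?_⟩
      rw [htrajS, hω]
      simp only [Fin.cases_succ]
      rw [hk]
      rw [Psi'_update p d ρ s.1 j (Sa j s) s.2]
      have h1 := (hSa j s).2 ᾱ hm
      linarith
    · have hrec : ∃ β' ∈ receiverSet' X Y,
          Vcost' d p s.1 β' + ε < Vcost' d p s.1 s.2 := by
        by_contra hc
        push_neg at hc
        refine hN ⟨hs1, hs2, fun j ᾱ hm => ?_, fun β' hm => ?_⟩
        · by_contra hlt
          push_neg at hlt
          exact h ⟨j, ᾱ, hm, by linarith⟩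
        · have := hc β' hm; linarith
      obtain ⟨β', hm, hβ'⟩ := hrec
      refine ⟨0, fun ω k hk hω => ?_⟩
      rw [htrajS, hω]
      simp only [Fin.cases_zero]
      rw [hk]
      rw [Psi'_beta p d ρ s.1 s.2 (Sβ s.1)]
      have h1 := (hSβ s.1).2 β' hm
      linarith
  -- lower bound for the potential
  have hL : ∀ ω k,
      -(ρ * ∑ i : Fin n, (Fintype.card (Y i) : ℝ) * (Fintype.card (W i) : ℝ)) ≤
        Psi' d p ρ (traj ω k).1 (traj ω k).2 := by
    intro ω k
    have hξ := xi'_nonneg p hp0 d hd (hvalid ω k).1 (hvalid ω k).2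
    have hz : ∑ i : Fin n, -((Fintype.card (Y i) : ℝ) * (Fintype.card (W i) : ℝ)) ≤
        ∑ i, zeta' p i ((traj ω k).1 i) :=
      Finset.sum_le_sum fun i _ => zeta'_lower p hp0 hp1 i ((hvalid ω k).1 i)
    rw [Finset.sum_neg_distrib] at hz
    have hz2 := mul_le_mul_of_nonneg_left hz hρ
    simp only [Psi']
    rw [mul_neg] at hz2
    linarith
  -- counting drops
  have hcount : ∀ ω K, (((Finset.range K).filter (fun k =>
        Psi' d p ρ (traj ω (k+1)).1 (traj ω (k+1)).2 + ε ≤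
          Psi' d p ρ (traj ω k).1 (traj ω k).2)).card : ℝ) * ε ≤
      Psi' d p ρ s0.1 s0.2 - Psi' d p ρ (traj ω K).1 (traj ω K).2 := by
    intro ω K
    induction K with
    | zero => simp [htraj0]
    | succ K ih =>
      rw [Finset.range_add_one, Finset.filter_insert]
      by_cases hK : Psi' d p ρ (traj ω (K+1)).1 (traj ω (K+1)).2 + ε ≤
          Psi' d p ρ (traj ω K).1 (traj ω K).2
      · rw [if_pos hK, Finset.card_insert_of_notMem (by simp)]
        push_cast
        linarith
      · rw [if_neg hK]
        have := hdec ω K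
        linarith
  -- the state at time k depends only on coordinates ≤ k
  have hagree : ∀ k (ω ω' : ℕ → Fin (n+1)), (∀ i, i ≤ k → ω i = ω' i) →
      traj ω k = traj ω' k := by
    intro k
    induction k with
    | zero => intro ω ω' _; rw [htraj0, htraj0]
    | succ k ih =>
      intro ω ω' h
      rw [htrajS, htrajS, ih ω ω' (fun i hi => h i (Nat.le_succ_of_le hi)),
        h (k+1) le_rfl]
  -- sets depending on finitely many coordinates are measurable
  have hmeas : ∀ (k : ℕ) (E : Set (ℕ → Fin (n+1))),
      (∀ ω ω', (∀ i, i ≤ k → ω i = ω' i) → ω ∈ E → ω' ∈ E) → MeasurableSet E := by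
    intro k E hE
    have hπ : Measurable (fun ω : ℕ → Fin (n+1) => fun i : Fin (k+1) => ω i) :=
      measurable_pi_lambda _ fun i => measurable_pi_apply _
    have hEeq : E = (fun ω : ℕ → Fin (n+1) => fun i : Fin (k+1) => ω i) ⁻¹'
        ((fun ω : ℕ → Fin (n+1) => fun i : Fin (k+1) => ω i) '' E) := by
      ext ω
      constructor
      · exact fun h => ⟨ω, h, rfl⟩
      · rintro ⟨ω', hω', hh⟩
        refine hE ω' ω (fun i hi => ?_) hω'
        exact congrFun hh ⟨i, Nat.lt_succ_of_le hi⟩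
    rw [hEeq]
    exact hπ ((Set.toFinite _).measurableSet)
  have hr0 : ((n : ℝ≥0∞) + 1) ≠ 0 := by simp
  have hrtop : ((n : ℝ≥0∞) + 1) ≠ ⊤ := by simp
  -- key inequality: P(not ε-Nash at k) ≤ (n+1) P(potential drops by ε at step k+1)
  have hkey : ∀ k : ℕ,
      μ {ω | ¬ IsEpsNash' d p ρ ε (traj ω k).1 (traj ω k).2} ≤
        ((n : ℝ≥0∞) + 1) *
          μ {ω | Psi' d p ρ (traj ω (k+1)).1 (traj ω (k+1)).2 + ε ≤
            Psi' d p ρ (traj ω k).1 (traj ω k).2} := by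
    intro k
    obtain ⟨ext, hext⟩ : ∃ ext : (Fin (k+1) → Fin (n+1)) → (ℕ → Fin (n+1)),
        ∀ g i (h : i < k+1), ext g i = g ⟨i, h⟩ :=
      ⟨fun g i => if h : i < k+1 then g ⟨i, h⟩ else 0, fun g i h => dif_pos h⟩
    set NN : Set (ℕ → Fin (n+1)) :=
      {ω | ¬ IsEpsNash' d p ρ ε (traj ω k).1 (traj ω k).2} with hNN
    set D : Set (ℕ → Fin (n+1)) :=
      {ω | Psi' d p ρ (traj ω (k+1)).1 (traj ω (k+1)).2 + ε ≤
        Psi' d p ρ (traj ω k).1 (traj ω k).2} with hD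
    set C : (Fin (k+1) → Fin (n+1)) → Set (ℕ → Fin (n+1)) :=
      fun g => {ω | ∀ i : Fin (k+1), ω i = g i} with hC
    set G : Finset (Fin (k+1) → Fin (n+1)) :=
      Finset.univ.filter (fun g => ext g ∈ NN) with hG
    have hCmeas : ∀ g, MeasurableSet (C g) := by
      intro g
      refine hmeas k _ (fun ω ω' hagr hω i => ?_)
      rw [← hagr i (Nat.lt_succ_iff.1 i.2)]
      exact hω i
    have hCμ : ∀ g, μ (C g) = (((n : ℝ≥0∞) + 1)⁻¹) ^ (k+1) := by
      intro g
      have h0 := hμ (Finset.range (k+1)) (ext g)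
      rw [Finset.card_range] at h0
      rw [← h0]
      congr 1
      ext ω
      simp only [hC, Set.mem_setOf_eq, Finset.mem_range]
      constructor
      · intro h i hi
        rw [hext g i hi]
        exact h ⟨i, hi⟩
      · intro h i
        have := h i.1 i.2
        rwa [hext g i.1 i.2, Fin.eta] at this
    have hNNeq : NN = ⋃ g ∈ G, C g := by
      ext ω
      constructor
      · intro hω
        refine Set.mem_biUnion (show (fun i : Fin (k+1) => ω i) ∈ G from ?_)
          (fun i => rfl)
        rw [hG, Finset.mem_filter]
        refine ⟨Finset.mem_univ _, ?_⟩
        have htr : traj (ext fun i : Fin (k+1) => ω i) k = traj ω k :=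
          hagree k _ ω (fun i hi => hext _ i (Nat.lt_succ_of_le hi))
        simp only [hNN, Set.mem_setOf_eq] at hω ⊢
        rw [htr]
        exact hω
      · intro hω
        obtain ⟨g, hgG, hωC⟩ := Set.mem_iUnion₂.1 hω
        rw [hG, Finset.mem_filter] at hgG
        have htr : traj (ext g) k = traj ω k :=
          hagree k _ ω (fun i hi => by
            rw [hext g i (Nat.lt_succ_of_le hi)]
            exact (hωC ⟨i, Nat.lt_succ_of_le hi⟩).symm)
        have := hgG.2
        simp only [hNN, Set.mem_setOf_eq] at this ⊢
        rwa [htr] at this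
    have hCdisj : (G : Set (Fin (k+1) → Fin (n+1))).PairwiseDisjoint C := by
      intro g _ g' _ hgg'
      refine Set.disjoint_left.2 (fun ω hω hω' => hgg' (funext fun i => ?_))
      rw [← hω i, ← hω' i]
    -- the witness player for each bad prefix
    have hwit : ∀ g : Fin (k+1) → Fin (n+1), ∃ j : Fin (n+1),
        ext g ∈ NN → (C g ∩ {ω | ω (k+1) = j}) ⊆ D := by
      intro g
      by_cases hg : ext g ∈ NN
      · obtain ⟨j, hj⟩ := hdrop (traj (ext g) k) ((hvalid _ k).1) ((hvalid _ k).2) hg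
        refine ⟨j, fun _ => ?_⟩
        rintro ω ⟨hω1, hω2⟩
        have htr : traj ω k = traj (ext g) k :=
          hagree k ω _ (fun i hi => by
            rw [hext g i (Nat.lt_succ_of_le hi)]
            exact hω1 ⟨i, Nat.lt_succ_of_le hi⟩)
        have := hj ω k htr hω2
        simp only [hD, Set.mem_setOf_eq]
        rw [htr]
        exact this
      · exact ⟨0, fun h => absurd h hg⟩
    choose jf hjf using hwit
    have hEμ : ∀ g, μ (C g ∩ {ω | ω (k+1) = jf g}) = (((n : ℝ≥0∞) + 1)⁻¹) ^ (k+2) := by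
      intro g
      classical
      set v : ℕ → Fin (n+1) := fun i => if i = k+1 then jf g else ext g i with hv
      have h0 := hμ (Finset.range (k+2)) v
      rw [Finset.card_range] at h0
      rw [← h0]
      congr 1
      ext ω
      simp only [hC, Set.mem_inter_iff, Set.mem_setOf_eq, Finset.mem_range]
      constructor
      · rintro ⟨h1, h2⟩ i hi
        rw [hv]
        simp only
        by_cases hik : i = k + 1
        · rw [if_pos hik, hik, h2]
        · have hik' : i < k + 1 := by omega
          rw [if_neg hik, hext g i hik']
          exact h1 ⟨i, hik'⟩
      · intro h
        constructor
        · intro i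
          have := h i.1 (Nat.lt_succ_of_lt i.2)
          rw [hv] at this
          simp only at this
          rw [if_neg (by omega), hext g i.1 i.2, Fin.eta] at this
          exact this
        · have := h (k+1) (by omega)
          rw [hv] at this
          simpa using this
    have hcancel : ((n : ℝ≥0∞) + 1) * ((((n : ℝ≥0∞) + 1)⁻¹) ^ (k+2)) =
        (((n : ℝ≥0∞) + 1)⁻¹) ^ (k+1) := by
      rw [pow_succ']
      rw [← mul_assoc, ENNReal.mul_inv_cancel hr0 hrtop, one_mul]
    have hEmeas : ∀ g, MeasurableSet (C g ∩ {ω | ω (k+1) = jf g}) := by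
      intro g
      refine hmeas (k+1) _ (fun ω ω' hagr hω => ?_)
      constructor
      · intro i
        rw [← hagr i.1 (by omega)]
        exact hω.1 i
      · show ω' (k+1) = jf g
        rw [← hagr (k+1) le_rfl]
        exact hω.2
    have hEdisj : (G : Set (Fin (k+1) → Fin (n+1))).PairwiseDisjoint
        (fun g => C g ∩ {ω | ω (k+1) = jf g}) := by
      intro g hg g' hg' hgg'
      exact (hCdisj hg hg' hgg').mono Set.inter_subset_left Set.inter_subset_left
    calc μ NN = ∑ g ∈ G, μ (C g) := by
          rw [hNNeq]
          exact measure_biUnion_finset hCdisj (fun g _ => hCmeas g)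
      _ = ∑ g ∈ G, ((n : ℝ≥0∞) + 1) * μ (C g ∩ {ω | ω (k+1) = jf g}) := by
          refine Finset.sum_congr rfl fun g _ => ?_
          rw [hEμ g, hcancel, hCμ g]
      _ = ((n : ℝ≥0∞) + 1) * ∑ g ∈ G, μ (C g ∩ {ω | ω (k+1) = jf g}) := by
          rw [Finset.mul_sum]
      _ = ((n : ℝ≥0∞) + 1) * μ (⋃ g ∈ G, (C g ∩ {ω | ω (k+1) = jf g})) := by
          rw [measure_biUnion_finset hEdisj (fun g _ => hEmeas g)]
      _ ≤ ((n : ℝ≥0∞) + 1) * μ D := by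
          refine mul_le_mul_right (measure_mono ?_) _
          refine Set.iUnion₂_subset fun g hg => ?_
          refine hjf g ?_
          rw [hG, Finset.mem_filter] at hg
          exact hg.2
  -- measurability of events
  have hDmeas : ∀ k, MeasurableSet {ω : ℕ → Fin (n+1) |
      Psi' d p ρ (traj ω (k+1)).1 (traj ω (k+1)).2 + ε ≤
        Psi' d p ρ (traj ω k).1 (traj ω k).2} := by
    intro k
    refine hmeas (k+1) _ (fun ω ω' hagr hω => ?_)
    have h1 : traj ω' k = traj ω k :=
      (hagree k ω ω' (fun i hi => hagr i (by omega))).symm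
    have h2 : traj ω' (k+1) = traj ω (k+1) := (hagree (k+1) ω ω' hagr).symm
    simp only [Set.mem_setOf_eq] at hω ⊢
    rw [h1, h2]; exact hω
  have hNNmeas : ∀ k, MeasurableSet {ω : ℕ → Fin (n+1) |
      ¬ IsEpsNash' d p ρ ε (traj ω k).1 (traj ω k).2} := by
    intro k
    refine hmeas k _ (fun ω ω' hagr hω => ?_)
    have h1 : traj ω' k = traj ω k := (hagree k ω ω' hagr).symm
    simp only [Set.mem_setOf_eq] at hω ⊢
    rw [h1]; exact hω
  -- the number of drops is uniformly bounded
  set Nb : ℝ := (Psi' d p ρ s0.1 s0.2 +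
    ρ * ∑ i : Fin n, (Fintype.card (Y i) : ℝ) * (Fintype.card (W i) : ℝ)) / ε with hNb
  have hcard : ∀ ω K, (((Finset.range K).filter (fun k =>
        Psi' d p ρ (traj ω (k+1)).1 (traj ω (k+1)).2 + ε ≤
          Psi' d p ρ (traj ω k).1 (traj ω k).2)).card : ℝ) ≤ Nb := by
    intro ω K
    have h1 := hcount ω K
    have h2 := hL ω K
    rw [hNb, le_div_iff₀ hε]
    linarith
  -- partial sums of drop probabilities are bounded
  have hsum : ∀ K : ℕ, ∑ k ∈ Finset.range K,
      μ {ω | Psi' d p ρ (traj ω (k+1)).1 (traj ω (k+1)).2 + ε ≤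
        Psi' d p ρ (traj ω k).1 (traj ω k).2} ≤ ENNReal.ofReal Nb := by
    intro K
    calc ∑ k ∈ Finset.range K, μ {ω | Psi' d p ρ (traj ω (k+1)).1 (traj ω (k+1)).2 + ε ≤
            Psi' d p ρ (traj ω k).1 (traj ω k).2}
        = ∫⁻ ω, ∑ k ∈ Finset.range K, Set.indicator
            {ω | Psi' d p ρ (traj ω (k+1)).1 (traj ω (k+1)).2 + ε ≤
              Psi' d p ρ (traj ω k).1 (traj ω k).2} (1 : (ℕ → Fin (n+1)) → ℝ≥0∞) ω ∂μ := by
          rw [MeasureTheory.lintegral_finset_sum _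
            (fun k _ => measurable_one.indicator (hDmeas k))]
          exact Finset.sum_congr rfl fun k _ =>
            (MeasureTheory.lintegral_indicator_one (hDmeas k)).symm
      _ ≤ ∫⁻ _, ENNReal.ofReal Nb ∂μ := by
          refine MeasureTheory.lintegral_mono fun ω => ?_
          have heq : ∑ k ∈ Finset.range K, Set.indicator
              {ω | Psi' d p ρ (traj ω (k+1)).1 (traj ω (k+1)).2 + ε ≤
                Psi' d p ρ (traj ω k).1 (traj ω k).2} (1 : (ℕ → Fin (n+1)) → ℝ≥0∞) ω
              = (((Finset.range K).filter (fun k =>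
                  Psi' d p ρ (traj ω (k+1)).1 (traj ω (k+1)).2 + ε ≤
                    Psi' d p ρ (traj ω k).1 (traj ω k).2)).card : ℝ≥0∞) := by
            rw [← Finset.sum_boole]
            exact Finset.sum_congr rfl fun k _ => by
              simp [Set.indicator_apply, Set.mem_setOf_eq]
          rw [heq, ← ENNReal.ofReal_natCast]
          exact ENNReal.ofReal_le_ofReal (hcard ω K)
      _ = ENNReal.ofReal Nb := by
          simp [MeasureTheory.lintegral_const, measure_univ]
  -- the series of non-equilibrium probabilities converges
  have htsumD : ∑' k : ℕ, μ {ω | Psi' d p ρ (traj ω (k+1)).1 (traj ω (k+1)).2 + ε ≤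
      Psi' d p ρ (traj ω k).1 (traj ω k).2} ≤ ENNReal.ofReal Nb := by
    rw [ENNReal.tsum_eq_iSup_sum]
    refine iSup_le fun s => ?_
    obtain ⟨K, hK⟩ := s.exists_nat_subset_range
    exact le_trans (Finset.sum_le_sum_of_subset hK) (hsum K)
  have htsum : ∑' k : ℕ, μ {ω | ¬ IsEpsNash' d p ρ ε (traj ω k).1 (traj ω k).2} ≠ ⊤ := by
    refine ne_top_of_le_ne_top ?_ (ENNReal.tsum_le_tsum fun k => hkey k)
    rw [ENNReal.tsum_mul_left]
    exact ENNReal.mul_ne_top hrtop (lt_of_le_of_lt htsumD ENNReal.ofReal_lt_top).ne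
  have htend0 : Tendsto (fun k => μ {ω | ¬ IsEpsNash' d p ρ ε (traj ω k).1 (traj ω k).2})
      atTop (nhds 0) := ENNReal.tendsto_atTop_zero_of_tsum_ne_top htsum
  have hfin : ∀ k, μ {ω | IsEpsNash' d p ρ ε (traj ω k).1 (traj ω k).2} =
      1 - μ {ω | ¬ IsEpsNash' d p ρ ε (traj ω k).1 (traj ω k).2} := by
    intro k
    have hcompl : {ω | IsEpsNash' d p ρ ε (traj ω k).1 (traj ω k).2} =
        {ω | ¬ IsEpsNash' d p ρ ε (traj ω k).1 (traj ω k).2}ᶜ := by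
      ext ω; simp
    rw [hcompl, prob_compl_eq_one_sub (hNNmeas k)]
  simp only [hfin]
  have hcont := ((ENNReal.continuous_sub_left
    (by norm_num : (1 : ℝ≥0∞) ≠ ⊤)).continuousAt (x := (0 : ℝ≥0∞))).tendsto.comp htend0
  simpa [Function.comp_def] using hcont
end
end
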